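/- arXiv:2404.18014 — 9 statements merged into one kernel-verified Lean document; each statement's English description precedes it below -/
import Mathlib

section
/- Let G be a finite simple graph admitting a cubical edge-labelling χ : E(G) → ℕ. Then there exist n and an embedding f of G into the hypercube Q_n (an isomorphism from G onto a subgraph of Q_n) such that for every edge xy of G, χ(xy) equals the direction of the edge f(x)f(y), i.e., the unique coordinate in which f(x) and f(y) differ. -/
open SimpleGraph

/-- The number of ones (`true` coordinates) of a vertex of the hypercube. -/
def onesCount {n : ℕ} (x : Fin n → Bool) : ℕ := (Finset.univ.filter fun i => x i = true).card

/-- The `n`-dimensional hypercube graph `Q_n`. -/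
def cube (n : ℕ) : SimpleGraph (Fin n → Bool) where
  Adj x y := hammingDist x y = 1
  symm := by constructor; intro x y h; rwa [hammingDist_comm]
  loopless := by constructor; intro x h; simp [hammingDist_self] at h

/-- The vertex set of the `k`-th layer of `Q_n`. -/
def layerSet (n k : ℕ) : Set (Fin n → Bool) := {x | onesCount x = k ∨ onesCount x = k + 1}

/-- The `k`-th layer of `Q_n`: the subgraph induced on vertices with `k` or `k+1` ones. -/
def layer (n k : ℕ) : SimpleGraph (layerSet n k) := (cube n).induce (layerSet n k)

/-- `f` is an isomorphism from `G` onto a subgraph of `H`. -/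
def IsEmbedding {V W : Type*} (G : SimpleGraph V) (H : SimpleGraph W) (f : V → W) : Prop :=
  Function.Injective f ∧ ∀ u v, G.Adj u v → H.Adj (f u) (f v)

/-- `f` is an isomorphism from `G` onto an induced subgraph of `H`. -/
def IsInducedEmbedding {V W : Type*} (G : SimpleGraph V) (H : SimpleGraph W) (f : V → W) : Prop :=
  Function.Injective f ∧ ∀ u v, G.Adj u v ↔ H.Adj (f u) (f v)

/-- `G` is cubical: isomorphic to a subgraph of some hypercube. -/
def IsCubical {V : Type*} (G : SimpleGraph V) : Prop :=
  ∃ (n : ℕ) (f : V → (Fin n → Bool)), IsEmbedding G (cube n) f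

/-- `G` is layered: isomorphic to a subgraph of some layer of some hypercube. -/
def IsLayered {V : Type*} (G : SimpleGraph V) : Prop :=
  ∃ (n k : ℕ) (f : V → layerSet n k), IsEmbedding G (layer n k) f

/-- A cubical edge-labelling. -/
def IsCubicalLabelling {V : Type*} (G : SimpleGraph V) (χ : Sym2 V → ℕ) : Prop :=
  (∀ (u : V) (w : G.Walk u u), w.IsCycle → ∀ c : ℕ, Even ((w.edges.map χ).count c)) ∧
  (∀ (u v : V) (w : G.Walk u v), w.IsPath → 0 < w.length →
      ∃ c : ℕ, Odd ((w.edges.map χ).count c))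

/-- A layered edge-labelling. -/
def IsLayeredLabelling {V : Type*} (G : SimpleGraph V) (χ : Sym2 V → ℕ) : Prop :=
  IsCubicalLabelling G χ ∧
  ∀ e₁ ∈ G.edgeSet, ∀ e₂ ∈ G.edgeSet, χ e₁ = χ e₂ →
    ∀ u v, u ∈ e₁ → v ∈ e₂ →
      ∀ (w : G.Walk u v), w.IsPath → (∀ e ∈ w.edges, χ e ≠ χ e₁) → Even w.length

/-- `(G, P)` is `t`-distance-separating. -/
def DistSeparating {V : Type*} (G : SimpleGraph V) (P : Set (Sym2 V)) (t : ℕ) : Prop :=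
  (∃ (n : ℕ) (f : V → (Fin n → Bool)), IsEmbedding G (cube n) f ∧
      ∀ x y : V, s(x, y) ∈ P → hammingDist (f x) (f y) = t) ∧
  (∀ (n k : ℕ) (g : V → layerSet n k), IsEmbedding G (layer n k) g →
      ∃ x y : V, s(x, y) ∈ P ∧ hammingDist (g x).1 (g y).1 = t + 2)
section AuxCubical

variable {V : Type} {G : SimpleGraph V}

private theorem aux_edges_eq_of_mem {u v : V} (p : G.Walk v u) (hp : p.IsPath)
    (he : s(u, v) ∈ p.edges) : p.edges = [s(u, v)] := by
  cases p with
  | nil => simp at he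
  | @cons _ y _ h' q =>
    rw [Walk.edges_cons] at he ⊢
    rcases List.mem_cons.mp he with h1 | h2
    · have huy : u = y := by
        rw [Sym2.eq_swap] at h1
        exact Sym2.congr_right.mp h1
      subst huy
      have hq : q = Walk.nil := by
        cases q with
        | nil => rfl
        | cons h'' r =>
          exfalso
          have h3 := ((Walk.cons_isPath_iff h' _).mp hp).1
          have h4 := ((Walk.cons_isPath_iff h'' r).mp h3).2
          exact h4 (Walk.end_mem_support r)
      subst hq
      rw [Sym2.eq_swap]
      simp
    · exfalso
      have hv : v ∈ q.support := Walk.snd_mem_support_of_mem_edges q h2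
      exact ((Walk.cons_isPath_iff h' q).mp hp).2 hv

private theorem aux_even_closed [DecidableEq V] {χ : Sym2 V → ℕ}
    (hcyc : ∀ (u : V) (w : G.Walk u u), w.IsCycle → ∀ c : ℕ, Even ((w.edges.map χ).count c)) :
    ∀ (n : ℕ) (u : V) (w : G.Walk u u), w.length ≤ n → ∀ c : ℕ,
      Even ((w.edges.map χ).count c) := by
  intro n
  induction n with
  | zero =>
    intro u w hw c
    have hnil : w = Walk.nil := Walk.nil_iff_eq_nil.mp (Walk.length_eq_zero_iff.mp (Nat.le_zero.mp hw))
    subst hnil; simp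
  | succ n ih =>
    intro u w hw c
    cases w with
    | nil => simp
    | @cons _ v _ h p =>
      by_cases hp : p.IsPath
      · by_cases he : s(u, v) ∈ p.edges
        · have hpe := aux_edges_eq_of_mem p hp he
          rw [Walk.edges_cons, hpe]
          by_cases hc : χ s(u, v) = c
          · simp [List.count_cons, hc]
          · simp [List.count_cons, hc]
        · exact hcyc u (.cons h p) ((Walk.cons_isCycle_iff p h).mpr ⟨hp, he⟩) c
      · rw [Walk.isPath_def] at hp
        obtain ⟨x, hxdup⟩ := List.exists_duplicate_iff_not_nodup.mpr hp
        have hx2 : 2 ≤ p.support.count x := List.duplicate_iff_two_le_count.mp hxdup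
        have hxw : x ∈ (Walk.cons h p).support := by
          rw [Walk.support_cons]
          exact List.mem_cons_of_mem _ hxdup.mem
        have hlen : ((Walk.cons h p).rotate x hxw).length = (Walk.cons h p).length := by
          have h5 := (Walk.rotate_edges (Walk.cons h p) x hxw).perm.length_eq
          rwa [Walk.length_edges, Walk.length_edges] at h5
        have hnn : ¬ ((Walk.cons h p).rotate x hxw).Nil := by
          rw [Walk.nil_iff_length_eq, hlen]
          simp
        obtain ⟨y, h', p', hrot⟩ := Walk.not_nil_iff.mp hnn
        have hcnt : 2 ≤ p'.support.count x := by
          have hperm := (Walk.support_rotate (Walk.cons h p) x hxw).perm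
          rw [hrot, Walk.support_cons] at hperm
          simp only [List.tail_cons, Walk.support_cons] at hperm
          rw [hperm.count_eq]
          exact hx2
        have hxp' : x ∈ p'.support := by
          have : 0 < p'.support.count x := by omega
          exact List.count_pos_iff.mp this
        have hspec : (p'.takeUntil x hxp').append (p'.dropUntil x hxp') = p' :=
          Walk.take_spec p' hxp'
        have hcnt1 : (p'.takeUntil x hxp').support.count x = 1 :=
          Walk.count_support_takeUntil_eq_one p' hxp'
        have hdne : p'.dropUntil x hxp' ≠ Walk.nil := by
          intro hnil
          have hsupp : p'.support
              = (p'.takeUntil x hxp').support ++ (p'.dropUntil x hxp').support.tail := by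
            rw [← Walk.support_append, hspec]
          rw [hsupp, List.count_append, hcnt1, hnil] at hcnt
          simp at hcnt
        have hdlen : 1 ≤ (p'.dropUntil x hxp').length := by
          rcases Nat.eq_zero_or_pos (p'.dropUntil x hxp').length with h0 | h1
          · exact absurd (Walk.nil_iff_eq_nil.mp (Walk.length_eq_zero_iff.mp h0)) hdne
          · exact h1
        have hplen : p'.length = (p'.takeUntil x hxp').length + (p'.dropUntil x hxp').length := by
          conv_lhs => rw [← hspec]
          rw [Walk.length_append]
        have hwlen : (Walk.cons h p).length = p'.length + 1 := by
          rw [← hlen, hrot]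
          simp
        have hwle : (Walk.cons h p).length ≤ n + 1 := hw
        have ev1 := ih x (Walk.cons h' (p'.takeUntil x hxp'))
          (by rw [Walk.length_cons]; omega) c
        have ev2 := ih x (p'.dropUntil x hxp') (by omega) c
        have hperm2 : (((Walk.cons h p).rotate x hxw).edges.map χ).count c
            = ((Walk.cons h p).edges.map χ).count c :=
          ((Walk.rotate_edges (Walk.cons h p) x hxw).perm.map χ).count_eq c
        rw [← hperm2, hrot]
        have hEdges : (Walk.cons h' p').edges
            = (Walk.cons h' (p'.takeUntil x hxp')).edges ++ (p'.dropUntil x hxp').edges := by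
          rw [Walk.edges_cons, Walk.edges_cons, List.cons_append, ← Walk.edges_append, hspec]
        rw [hEdges, List.map_append, List.count_append]
        exact ev1.add ev2

noncomputable def auxWalk (G : SimpleGraph V) (v : V) :
    G.Walk ((G.connectedComponentMk v).out) v :=
  Classical.choice (ConnectedComponent.eq.mp ((G.connectedComponentMk v).out_eq))

noncomputable def auxCnt (G : SimpleGraph V) (χ : Sym2 V → ℕ) [DecidableEq V] (v : V) (c : ℕ) :
    ℕ :=
  ((auxWalk G v).edges.map χ).count c

private theorem aux_key [DecidableEq V] (χ : Sym2 V → ℕ)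
    (hcyc : ∀ (u : V) (w : G.Walk u u), w.IsCycle → ∀ c : ℕ, Even ((w.edges.map χ).count c))
    {u v : V} (W : G.Walk u v) (c : ℕ) :
    Even (auxCnt G χ u c + (W.edges.map χ).count c + auxCnt G χ v c) := by
  have hr : (G.connectedComponentMk v).out = (G.connectedComponentMk u).out := by
    have : G.connectedComponentMk u = G.connectedComponentMk v :=
      ConnectedComponent.sound ⟨W⟩
    rw [this]
  have hev := aux_even_closed hcyc
    ((auxWalk G u).append (W.append ((auxWalk G v).reverse.copy rfl hr))).length
    _ ((auxWalk G u).append (W.append ((auxWalk G v).reverse.copy rfl hr))) le_rfl c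
  have hEq : ((((auxWalk G u).append (W.append ((auxWalk G v).reverse.copy rfl hr))).edges.map
      χ).count c)
      = auxCnt G χ u c + (W.edges.map χ).count c + auxCnt G χ v c := by
    simp [auxCnt, Walk.edges_append, Walk.edges_copy, Walk.edges_reverse, List.map_append,
      List.map_reverse, List.count_append, List.count_reverse, Nat.add_assoc]
  rwa [hEq] at hev

private theorem aux_parity_decide_ne (a b : ℕ) :
    (decide (a % 2 = 1) ≠ decide (b % 2 = 1)) ↔ ¬ (a % 2 = b % 2) := by
  by_cases h1 : a % 2 = 1 <;> by_cases h2 : b % 2 = 1 <;> simp [h1, h2] <;> omega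

private theorem aux_adj [DecidableEq V] (χ : Sym2 V → ℕ)
    (hcyc : ∀ (u : V) (w : G.Walk u u), w.IsCycle → ∀ c : ℕ, Even ((w.edges.map χ).count c))
    {u v : V} (h : G.Adj u v) (c : ℕ) :
    (auxCnt G χ u c % 2 = auxCnt G χ v c % 2) ↔ c ≠ χ s(u, v) := by
  have hk := aux_key χ hcyc h.toWalk c
  have hW : ((h.toWalk.edges).map χ).count c = if χ s(u, v) = c then 1 else 0 := by
    simp [SimpleGraph.Adj.toWalk, List.count_cons]
  rw [hW] at hk
  rcases hk with ⟨m, hm⟩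
  by_cases hc : χ s(u, v) = c
  · rw [if_pos hc] at hm
    exact iff_of_false (by omega) (not_not_intro hc.symm)
  · rw [if_neg hc] at hm
    exact iff_of_true (by omega) (fun hcc => hc hcc.symm)

end AuxCubical

/-- A graph admitting a cubical edge-labelling embeds into some
hypercube with the labels as edge directions. -/
theorem embedding_of_cubical_labelling {V : Type} [Fintype V]
    (G : SimpleGraph V) (χ : Sym2 V → ℕ) (hχ : IsCubicalLabelling G χ) :
    ∃ (n : ℕ) (f : V → (Fin n → Bool)), IsEmbedding G (cube n) f ∧
      ∀ x y : V, G.Adj x y → ∃ i : Fin n, (i : ℕ) = χ s(x, y) ∧ f x i ≠ f y i := by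
  classical
  obtain ⟨hcyc, hpath⟩ := hχ
  haveI : Fintype (ConnectedComponent G) := Fintype.ofFinite _
  set N : ℕ := Finset.univ.sup χ + 1 with hNdef
  have hltN : ∀ e : Sym2 V, χ e < N := fun e =>
    Nat.lt_succ_of_le (Finset.le_sup (Finset.mem_univ e))
  set k := Fintype.card (ConnectedComponent G) with hkdef
  set eK : ConnectedComponent G ≃ Fin k := Fintype.equivFin _ with heK
  set f : V → (Fin (N + k) → Bool) := fun v =>
    Fin.append (fun i : Fin N => decide (auxCnt G χ v (i : ℕ) % 2 = 1))
      (fun j : Fin k => decide (eK (G.connectedComponentMk v) = j)) with hfdef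
  have key : ∀ {x y : V}, G.Adj x y → ∀ i : Fin (N + k),
      (f x i ≠ f y i ↔ (i : ℕ) = χ s(x, y)) := by
    intro x y h i
    induction i using Fin.addCases with
    | left i =>
      rw [hfdef]
      simp only [Fin.append_left, Fin.coe_castAdd]
      rw [aux_parity_decide_ne, aux_adj χ hcyc h (i : ℕ)]
      simp
    | right j =>
      rw [hfdef]
      simp only [Fin.append_right]
      have hcc : G.connectedComponentMk x = G.connectedComponentMk y :=
        ConnectedComponent.sound h.reachable
      rw [hcc]
      have hxy := hltN s(x, y)
      have hval : ((Fin.natAdd N j : Fin (N + k)) : ℕ) = N + (j : ℕ) := rfl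
      simp only [ne_eq, not_true_eq_false, false_iff, hval]
      omega
  have hadj1 : ∀ {x y : V}, G.Adj x y → hammingDist (f x) (f y) = 1 := by
    intro x y h
    have hlt := hltN s(x, y)
    have hfilter : (Finset.univ.filter fun i => f x i ≠ f y i)
        = {(Fin.castAdd k ⟨χ s(x, y), hlt⟩ : Fin (N + k))} := by
      ext i
      simp only [Finset.mem_filter, Finset.mem_univ, true_and, Finset.mem_singleton]
      rw [key h i]
      constructor
      · intro hv
        exact Fin.ext (by simpa using hv)
      · intro hv
        rw [hv]
        rfl
    show (Finset.univ.filter fun i => f x i ≠ f y i).card = 1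
    rw [hfilter]
    simp
  have hinj : Function.Injective f := by
    intro u v huv
    by_contra hne
    have hcompeq : G.connectedComponentMk u = G.connectedComponentMk v := by
      by_contra hc
      have hne2 : f u (Fin.natAdd N (eK (G.connectedComponentMk u)))
          ≠ f v (Fin.natAdd N (eK (G.connectedComponentMk u))) := by
        rw [hfdef]
        simp only [Fin.append_right, ne_eq, decide_eq_decide]
        intro hiff
        exact hc (eK.injective (hiff.mp trivial)).symm
      exact hne2 (by rw [huv])
    have hreach : G.Reachable u v := ConnectedComponent.eq.mp hcompeq
    obtain ⟨W⟩ := hreach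
    have hP : W.bypass.IsPath := Walk.bypass_isPath W
    have hPlen : 0 < W.bypass.length := by
      rcases Nat.eq_zero_or_pos W.bypass.length with h0 | h1
      · exact absurd (Walk.eq_of_length_eq_zero h0) hne
      · exact h1
    obtain ⟨c, hodd⟩ := hpath u v W.bypass hP hPlen
    have hkey := aux_key χ hcyc W.bypass c
    have hne2 : ¬ (auxCnt G χ u c % 2 = auxCnt G χ v c % 2) := by
      rcases hkey with ⟨m, hm⟩
      rcases hodd with ⟨m2, hm2⟩
      omega
    have hcN : c < N := by
      have hpos : 0 < (W.bypass.edges.map χ).count c := by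
        rcases hodd with ⟨m2, hm2⟩
        omega
      obtain ⟨e, he, rfl⟩ := List.mem_map.mp (List.count_pos_iff.mp hpos)
      exact hltN e
    have hne3 : f u (Fin.castAdd k ⟨c, hcN⟩) ≠ f v (Fin.castAdd k ⟨c, hcN⟩) := by
      rw [hfdef]
      simp only [Fin.append_left]
      rw [aux_parity_decide_ne]
      exact hne2
    exact hne3 (by rw [huv])
  refine ⟨N + k, f, ⟨hinj, fun x y h => hadj1 h⟩,
    fun x y h => ⟨Fin.castAdd k ⟨χ s(x, y), hltN _⟩, rfl, ?_⟩⟩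
  exact (key h _).mpr rfl
end

section
/- Let G be a finite simple graph admitting a layered edge-labelling χ : E(G) → ℕ. Then there exist n and k and an embedding f of G into the k-th layer of Q_n (an isomorphism from G onto a subgraph of that layer) such that for every edge xy of G, χ(xy) equals the direction of the edge f(x)f(y), i.e., the unique coordinate in which f(x) and f(y) differ. -/
open SimpleGraph

namespace LayeredAux

variable {V : Type} [DecidableEq V] {G : SimpleGraph V} {χ : Sym2 V → ℕ}

lemma exists_split {x : V} (w : G.Walk x x) (hx : w.support.tail.Duplicate x) :
    ∃ (w₁ w₂ : G.Walk x x), w.edges = w₁.edges ++ w₂.edges ∧ 0 < w₁.length ∧ 0 < w₂.length ∧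
      w₁.length + w₂.length = w.length := by
  cases w with
  | nil => exact absurd hx (by simp [List.not_duplicate_singleton, List.nodup_iff_forall_not_duplicate.mp (List.nodup_singleton x) ])
  | cons h t =>
    rw [SimpleGraph.Walk.support_cons, List.tail_cons] at hx
    have hm : x ∈ t.support := hx.mem
    have hcount : (t.takeUntil x hm).support.count x = 1 :=
      t.count_support_takeUntil_eq_one hm
    refine ⟨Walk.cons h (t.takeUntil x hm), t.dropUntil x hm, ?_, by simp, ?_, ?_⟩
    · rw [Walk.edges_cons]
      have := congrArg SimpleGraph.Walk.edges (t.take_spec hm)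
      rw [Walk.edges_append] at this
      rw [← this, Walk.edges_cons, List.cons_append]
    · by_contra h0
      push_neg at h0
      interval_cases hh : (t.dropUntil x hm).length
      have hnil : (t.dropUntil x hm).Nil := SimpleGraph.Walk.nil_iff_length_eq.mpr hh
      have hsupp := congrArg SimpleGraph.Walk.support (t.take_spec hm)
      rw [Walk.support_append] at hsupp
      have h2 : 2 ≤ t.support.count x := List.duplicate_iff_two_le_count.mp hx
      rw [← hsupp, List.count_append, hcount] at h2
      have : (t.dropUntil x hm).support = [x] := by
        cases hd : (t.dropUntil x hm) with
        | nil => simp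
        | cons h' t' => rw [hd] at hnil; exact absurd hnil SimpleGraph.Walk.not_nil_cons
      rw [this] at h2
      simp at h2
    · have := congrArg SimpleGraph.Walk.length (t.take_spec hm)
      rw [Walk.length_append] at this
      simp only [Walk.length_cons]
      omega

end LayeredAux

namespace LayeredAux2
open LayeredAux
variable {V : Type} [DecidableEq V] {G : SimpleGraph V} {χ : Sym2 V → ℕ}

lemma count_even_closed
    (hcyc : ∀ (u : V) (w : G.Walk u u), w.IsCycle → ∀ c : ℕ, Even ((w.edges.map χ).count c)) :
    ∀ (u : V) (w : G.Walk u u) (c : ℕ), Even ((w.edges.map χ).count c) := by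
  intro u w c
  generalize hn : w.length = n
  induction n using Nat.strong_induction_on generalizing u w c with
  | _ n IH =>
  cases w with
  | nil => simp
  | cons h t =>
    set w := SimpleGraph.Walk.cons h t with hw
    by_cases hdup : w.support.tail.Nodup
    · -- no duplicates in tail
      have htp : t.IsPath := by
        rw [SimpleGraph.Walk.isPath_def]
        rw [hw, SimpleGraph.Walk.support_cons, List.tail_cons] at hdup
        exact hdup
      rename_i y
      by_cases he : s(u, y) ∈ t.edges
      · -- t must be a single edge
        cases t with
        | nil => exact absurd h (G.loopless.irrefl u)
        | cons h₁ t₁ =>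
          rename_i z
          rw [SimpleGraph.Walk.edges_cons, List.mem_cons] at he
          rcases he with he | he
          · -- z = u
            have huy : u ≠ y := G.ne_of_adj h
            have hz : u = z := by
              rw [Sym2.eq_iff] at he
              rcases he with ⟨he1, he2⟩ | ⟨he1, he2⟩
              · exact absurd he1 huy
              · exact he1
            subst hz
            have hp₁ : t₁.IsPath := htp.of_cons
            have ht₁ : t₁ = SimpleGraph.Walk.nil := congrArg Subtype.val (SimpleGraph.Path.loop_eq ⟨t₁, hp₁⟩)
            subst ht₁
            show Even (List.count c (List.map χ [s(u,y), s(y,u)]))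
            have : s(y, u) = s(u, y) := Sym2.eq_swap
            rw [this]
            simp only [List.map_cons, List.map_nil, List.count_cons, List.count_nil]
            rcases eq_or_ne (χ s(u,y)) c with hc | hc <;> simp [hc] <;> omega
          · -- y would appear twice in support
            have : s(u, y) = s(y, u) := Sym2.eq_swap
            rw [this] at he
            have hy : y ∈ t₁.support := t₁.fst_mem_support_of_mem_edges he
            have : (SimpleGraph.Walk.cons h₁ t₁).support.Nodup := htp.support_nodup
            rw [SimpleGraph.Walk.support_cons, List.nodup_cons] at this
            exact absurd hy this.1
      · -- cycle
        have hcyc' : w.IsCycle := (SimpleGraph.Walk.cons_isCycle_iff t h).mpr ⟨htp, he⟩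
        exact hcyc u w hcyc' c
    · -- duplicate in tail: split
      obtain ⟨x, hx⟩ := List.exists_duplicate_iff_not_nodup.mpr hdup
      by_cases hxu : x = u
      · subst hxu
        obtain ⟨w₁, w₂, hed, h1, h2, hlen⟩ := exists_split w hx
        rw [hed, List.map_append, List.count_append]
        exact Even.add (IH w₁.length (by omega) x w₁ c rfl) (IH w₂.length (by omega) x w₂ c rfl)
      · have hxs : x ∈ w.support := by
          rw [SimpleGraph.Walk.support_cons]
          exact List.mem_cons_of_mem _ (by
            rw [hw, SimpleGraph.Walk.support_cons, List.tail_cons] at hx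
            exact hx.mem)
        set w' := w.rotate x hxs with hw'
        have hper : List.Perm w'.edges w.edges := (w.rotate_edges x hxs).perm
        have hcnt : (w'.edges.map χ).count c = (w.edges.map χ).count c :=
          (hper.map χ).count_eq c
        have hlen' : w'.length = w.length := by
          have := hper.length_eq
          rwa [SimpleGraph.Walk.length_edges, SimpleGraph.Walk.length_edges] at this
        have hx' : w'.support.tail.Duplicate x := by
          rw [List.duplicate_iff_two_le_count] at hx ⊢
          rwa [((w.support_rotate x hxs).perm.count_eq x)]
        obtain ⟨w₁, w₂, hed, h1, h2, hlen⟩ := exists_split w' hx'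
        rw [← hcnt, hed, List.map_append, List.count_append]
        have hn' : w₁.length + w₂.length = n := by rw [hlen, hlen', hn]
        exact Even.add (IH w₁.length (by omega) x w₁ c rfl) (IH w₂.length (by omega) x w₂ c rfl)

end LayeredAux2

namespace LayeredAux3
open LayeredAux LayeredAux2
variable {V : Type} [DecidableEq V]

lemma even_length_of_counts {l : List ℕ} (h : ∀ c, Even (l.count c)) : Even l.length := by
  classical
  rw [← List.sum_toFinset_count_eq_length l]
  exact Finset.even_sum _ (fun c _ => h c)

lemma even_iff_zmod (n : ℕ) : Even n ↔ (n : ZMod 2) = 0 := by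
  rw [ZMod.natCast_eq_zero_iff]
  exact even_iff_two_dvd

lemma zmod_cancel {A B C : ZMod 2} (h : A + B + C = 0) : C = A + B := by
  revert h; revert A B C; decide

noncomputable def rep (G : SimpleGraph V) (v : V) : V := (G.connectedComponentMk v).out

lemma reachable_rep (G : SimpleGraph V) (v : V) : G.Reachable (rep G v) v := by
  apply SimpleGraph.ConnectedComponent.exact
  exact (G.connectedComponentMk v).out_eq

lemma rep_eq_of_reachable {G : SimpleGraph V} {a b : V} (h : G.Reachable a b) :
    rep G a = rep G b := by
  unfold rep
  rw [SimpleGraph.ConnectedComponent.eq.mpr h]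

lemma rep_rep (G : SimpleGraph V) (v : V) : rep G (rep G v) = rep G v :=
  rep_eq_of_reachable (reachable_rep G v)

noncomputable def theWalk (G : SimpleGraph V) (v : V) : G.Walk (rep G v) v :=
  (reachable_rep G v).some

noncomputable def Cnt (G : SimpleGraph V) (χ : Sym2 V → ℕ) (v : V) (c : ℕ) : ZMod 2 :=
  (((theWalk G v).edges.map χ).count c : ZMod 2)

noncomputable def Eps (G : SimpleGraph V) (v : V) : ZMod 2 := ((theWalk G v).length : ZMod 2)

variable {G : SimpleGraph V} {χ : Sym2 V → ℕ}

lemma key_rel (hcyc : ∀ (u : V) (w : G.Walk u u), w.IsCycle → ∀ c : ℕ, Even ((w.edges.map χ).count c))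
    {a b : V} (w : G.Walk a b) :
    (Eps G b = Eps G a + (w.length : ZMod 2)) ∧
    ∀ c : ℕ, Cnt G χ b c = Cnt G χ a c + (((w.edges.map χ).count c : ℕ) : ZMod 2) := by
  have hr : rep G a = rep G b := rep_eq_of_reachable w.reachable
  set closed : G.Walk (rep G a) (rep G a) :=
    ((theWalk G a).append w).append (((theWalk G b).copy hr.symm rfl).reverse) with hcl
  have hev := count_even_closed hcyc (rep G a) closed
  have hedges : closed.edges =
      ((theWalk G a).edges ++ w.edges) ++ ((theWalk G b).edges).reverse := by
    rw [hcl]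
    rw [SimpleGraph.Walk.edges_append, SimpleGraph.Walk.edges_append,
      SimpleGraph.Walk.edges_reverse, SimpleGraph.Walk.edges_copy]
  constructor
  · have hlen : Even closed.length := by
      have := even_length_of_counts (l := closed.edges.map χ) (fun c => hev c)
      rwa [List.length_map, SimpleGraph.Walk.length_edges] at this
    have hle : closed.length = (theWalk G a).length + w.length + (theWalk G b).length := by
      have := congrArg List.length hedges
      simp only [List.length_append, List.length_reverse, SimpleGraph.Walk.length_edges] at this
      omega
    rw [hle, even_iff_zmod] at hlen
    push_cast at hlen
    exact zmod_cancel hlen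
  · intro c
    have := hev c
    rw [hedges] at this
    rw [even_iff_zmod] at this
    simp only [List.map_append, List.count_append, List.map_reverse, List.count_reverse] at this
    push_cast at this
    exact zmod_cancel this

lemma eps_edge (hcyc : ∀ (u : V) (w : G.Walk u u), w.IsCycle → ∀ c : ℕ, Even ((w.edges.map χ).count c))
    {a b : V} (h : G.Adj a b) : Eps G b = Eps G a + 1 := by
  have := (key_rel (χ := χ) hcyc (SimpleGraph.Walk.cons h SimpleGraph.Walk.nil)).1
  simpa using this

lemma cnt_edge (hcyc : ∀ (u : V) (w : G.Walk u u), w.IsCycle → ∀ c : ℕ, Even ((w.edges.map χ).count c))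
    {a b : V} (h : G.Adj a b) (c : ℕ) :
    Cnt G χ b c = Cnt G χ a c + (if χ s(a,b) = c then 1 else 0) := by
  have := (key_rel hcyc (SimpleGraph.Walk.cons h SimpleGraph.Walk.nil)).2 c
  rw [this]
  congr 1
  simp only [SimpleGraph.Walk.edges_cons, SimpleGraph.Walk.edges_nil, List.map_cons, List.map_nil,
    List.count_cons, List.count_nil]
  split <;> simp_all

lemma eps_rep (hcyc : ∀ (u : V) (w : G.Walk u u), w.IsCycle → ∀ c : ℕ, Even ((w.edges.map χ).count c))
    (v : V) : Eps G (rep G v) = 0 := by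
  have hw : Eps G (rep G v) = (((theWalk G (rep G v)).copy (rep_rep G v) rfl).length : ZMod 2) := by
    rw [SimpleGraph.Walk.length_copy]; rfl
  rw [hw, ← even_iff_zmod]
  have := count_even_closed (χ := χ) hcyc (rep G v) ((theWalk G (rep G v)).copy (rep_rep G v) rfl)
  have := even_length_of_counts (l := ((theWalk G (rep G v)).copy (rep_rep G v) rfl).edges.map χ) this
  rwa [List.length_map, SimpleGraph.Walk.length_edges] at this

lemma cnt_rep (hcyc : ∀ (u : V) (w : G.Walk u u), w.IsCycle → ∀ c : ℕ, Even ((w.edges.map χ).count c))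
    (v : V) (c : ℕ) : Cnt G χ (rep G v) c = 0 := by
  have := count_even_closed (χ := χ) hcyc (rep G v) ((theWalk G (rep G v)).copy (rep_rep G v) rfl) c
  rw [SimpleGraph.Walk.edges_copy] at this
  rw [even_iff_zmod] at this
  exact this

end LayeredAux3

namespace LayeredAux4
open LayeredAux LayeredAux2 LayeredAux3
variable {V : Type} [DecidableEq V] {G : SimpleGraph V} {χ : Sym2 V → ℕ}

lemma zmod_self_add (x : ZMod 2) : x + x = 0 := by revert x; decide

lemma exists_first_edge {c : ℕ} : ∀ {x y : V} (p : G.Walk x y), (∃ e ∈ p.edges, χ e = c) →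
    ∃ (a b : V) (p₁ : G.Walk x a) (hab : G.Adj a b) (p₂ : G.Walk b y),
      p = p₁.append (SimpleGraph.Walk.cons hab p₂) ∧ χ s(a,b) = c ∧ ∀ e ∈ p₁.edges, χ e ≠ c := by
  intro x y p
  induction p with
  | nil => rintro ⟨e, he, -⟩; simp at he
  | @cons u v w h q IH =>
    intro hex
    by_cases hc : χ s(u, v) = c
    · exact ⟨u, v, SimpleGraph.Walk.nil, h, q, by simp, hc, by simp⟩
    · have hq : ∃ e ∈ q.edges, χ e = c := by
        obtain ⟨e, he, hec⟩ := hex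
        rw [SimpleGraph.Walk.edges_cons, List.mem_cons] at he
        rcases he with rfl | he
        · exact absurd hec hc
        · exact ⟨e, he, hec⟩
      obtain ⟨a, b, p₁, hab, p₂, heq, hec, hav⟩ := IH hq
      refine ⟨a, b, SimpleGraph.Walk.cons h p₁, hab, p₂, ?_, hec, ?_⟩
      · rw [SimpleGraph.Walk.cons_append, heq]
      · intro e he
        rw [SimpleGraph.Walk.edges_cons, List.mem_cons] at he
        rcases he with rfl | he
        · exact hc
        · exact hav e he

section Hyps
variable (hcyc : ∀ (u : V) (w : G.Walk u u), w.IsCycle → ∀ c : ℕ, Even ((w.edges.map χ).count c))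
variable (hlay : ∀ e₁ ∈ G.edgeSet, ∀ e₂ ∈ G.edgeSet, χ e₁ = χ e₂ →
    ∀ u v, u ∈ e₁ → v ∈ e₂ →
      ∀ (w : G.Walk u v), w.IsPath → (∀ e ∈ w.edges, χ e ≠ χ e₁) → Even w.length)

include hcyc hlay in
lemma count_path {c : ℕ} : ∀ (n : ℕ) {x y : V} (p : G.Walk x y), p.length = n → p.IsPath →
    ∀ e₁ ∈ G.edgeSet, ∀ e₂ ∈ G.edgeSet, χ e₁ = c → χ e₂ = c → x ∈ e₁ → y ∈ e₂ →
    (((p.edges.map χ).count c : ℕ) : ZMod 2) = Eps G x + Eps G y := by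
  intro n
  induction n using Nat.strong_induction_on with
  | _ n IH =>
  intro x y p hn hp e₁ he₁ e₂ he₂ hc₁ hc₂ hx hy
  by_cases hex : ∃ e ∈ p.edges, χ e = c
  · obtain ⟨a, b, p₁, hab, p₂, heq, hec, hav⟩ := exists_first_edge p hex
    subst heq
    have hp₁ : p₁.IsPath := hp.of_append_left
    have hp₂ : p₂.IsPath := (hp.of_append_right).of_cons
    -- p₁ has even length
    have hev₁ : Even p₁.length := by
      apply hlay e₁ he₁ s(a,b) (G.mem_edgeSet.mpr hab) (by rw [hc₁, hec]) x a hx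
        (Sym2.mem_mk_left a b) p₁ hp₁
      intro e he
      rw [hc₁]
      exact hav e he
    have hEa : Eps G a = Eps G x := by
      have h1 := (key_rel (χ := χ) hcyc p₁).1
      rw [even_iff_zmod] at hev₁
      rw [h1, hev₁, add_zero]
    have hEb : Eps G b = Eps G a + 1 := eps_edge hcyc hab
    have hlen : p₂.length < n := by
      rw [← hn, SimpleGraph.Walk.length_append, SimpleGraph.Walk.length_cons]
      omega
    have hIH := IH p₂.length hlen p₂ rfl hp₂ s(a,b) (G.mem_edgeSet.mpr hab) e₂ he₂ hec hc₂
      (Sym2.mem_mk_right a b) hy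
    have hcnt1 : (p₁.edges.map χ).count c = 0 := by
      rw [List.count_eq_zero]
      intro hmem
      obtain ⟨e, he, hce⟩ := List.mem_map.mp hmem
      exact hav e he hce
    rw [SimpleGraph.Walk.edges_append, SimpleGraph.Walk.edges_cons, List.map_append,
      List.count_append, List.map_cons, List.count_cons, hcnt1]
    push_cast
    simp only [hec, beq_self_eq_true, if_true]
    rw [hIH, hEb, hEa]
    have h2 : ∀ A B : ZMod 2, 0 + (A + 1 + B + 1) = A + B := by decide
    exact h2 _ _
  · push_neg at hex
    have hev : Even p.length := by
      apply hlay e₁ he₁ e₂ he₂ (by rw [hc₁, hc₂]) x y hx hy p hp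
      intro e he
      rw [hc₁]
      exact fun hce => hex e he hce
    have h1 := (key_rel (χ := χ) hcyc p).1
    rw [even_iff_zmod] at hev
    rw [hev, add_zero] at h1
    have hcnt : (p.edges.map χ).count c = 0 := by
      rw [List.count_eq_zero]
      intro hmem
      obtain ⟨e, he, hce⟩ := List.mem_map.mp hmem
      exact hex e he hce
    rw [hcnt, h1]
    push_cast
    rw [zmod_self_add]

include hcyc hlay in
lemma cnt_eq_kl {c : ℕ} {x x' : V}
    (hx : ∃ y, G.Adj x y ∧ χ s(x,y) = c) (hx' : ∃ y, G.Adj x' y ∧ χ s(x',y) = c)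
    (hex : Eps G x = Eps G x') (hr : rep G x = rep G x') : Cnt G χ x c = Cnt G χ x' c := by
  obtain ⟨y, hy, hyc⟩ := hx
  obtain ⟨y', hy', hyc'⟩ := hx'
  have hre : G.Reachable x x' := ((reachable_rep G x).symm.trans (hr ▸ reachable_rep G x'))
  obtain ⟨w0⟩ := hre
  set p := w0.toPath with hp
  have hcp := count_path hcyc hlay p.val.length p.val rfl p.property
    s(x,y) (G.mem_edgeSet.mpr hy) s(x',y') (G.mem_edgeSet.mpr hy') hyc hyc'
    (Sym2.mem_mk_left x y) (Sym2.mem_mk_left x' y')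
  rw [← hex, zmod_self_add] at hcp
  have h2 := (key_rel (χ := χ) hcyc p.val).2 c
  rw [h2, hcp, add_zero]

end Hyps
end LayeredAux4

namespace LayeredAux5
open LayeredAux LayeredAux2 LayeredAux3 LayeredAux4
variable {V : Type} [DecidableEq V]

noncomputable def baseBit (G : SimpleGraph V) (χ : Sym2 V → ℕ) (b : V) (c : ℕ) : Bool :=
  letI := Classical.propDecidable (∃ x, (∃ y, G.Adj x y ∧ χ s(x,y) = c) ∧ Eps G x = 0 ∧ rep G x = b)
  if h : ∃ x, (∃ y, G.Adj x y ∧ χ s(x,y) = c) ∧ Eps G x = 0 ∧ rep G x = b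
  then decide (Cnt G χ h.choose c = 1) else false

noncomputable def lbl (G : SimpleGraph V) (χ : Sym2 V → ℕ) (v : V) (c : ℕ) : Bool :=
  xor (baseBit G χ (rep G v) c) (decide (Cnt G χ v c = 1))

variable {G : SimpleGraph V} {χ : Sym2 V → ℕ}

section Hyps
variable (hcyc : ∀ (u : V) (w : G.Walk u u), w.IsCycle → ∀ c : ℕ, Even ((w.edges.map χ).count c))
variable (hlay : ∀ e₁ ∈ G.edgeSet, ∀ e₂ ∈ G.edgeSet, χ e₁ = χ e₂ →
    ∀ u v, u ∈ e₁ → v ∈ e₂ →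
      ∀ (w : G.Walk u v), w.IsPath → (∀ e ∈ w.edges, χ e ≠ χ e₁) → Even w.length)

include hcyc hlay in
lemma baseBit_spec {c : ℕ} {a : V} (ha : ∃ y, G.Adj a y ∧ χ s(a,y) = c) (heps : Eps G a = 0) :
    baseBit G χ (rep G a) c = decide (Cnt G χ a c = 1) := by
  have hex : ∃ x, (∃ y, G.Adj x y ∧ χ s(x,y) = c) ∧ Eps G x = 0 ∧ rep G x = rep G a :=
    ⟨a, ha, heps, rfl⟩
  rw [baseBit, dif_pos hex]
  obtain ⟨hadj, heps', hrep⟩ := hex.choose_spec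
  have := cnt_eq_kl hcyc hlay hadj ha (by rw [heps', heps]) hrep
  rw [this]

include hcyc hlay in
lemma lbl_edge {a b : V} (h : G.Adj a b) :
    (∀ d : ℕ, d ≠ χ s(a,b) → lbl G χ a d = lbl G χ b d) ∧
    (lbl G χ a (χ s(a,b)) ≠ lbl G χ b (χ s(a,b))) ∧
    (Eps G a = 0 → lbl G χ a (χ s(a,b)) = false ∧ lbl G χ b (χ s(a,b)) = true) := by
  have hrep : rep G a = rep G b := rep_eq_of_reachable h.reachable
  refine ⟨?_, ?_, ?_⟩
  · intro d hd
    have hcd := cnt_edge hcyc h d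
    rw [if_neg (fun hh => hd hh.symm), add_zero] at hcd
    rw [lbl, lbl, hrep, hcd]
  · have hcd := cnt_edge hcyc h (χ s(a,b))
    rw [if_pos rfl] at hcd
    rw [lbl, lbl, hrep, hcd]
    have : ∀ (x : ZMod 2) (b : Bool),
        xor b (decide (x = 1)) ≠ xor b (decide (x + 1 = 1)) := by decide
    exact this _ _
  · intro heps
    have hbb := baseBit_spec hcyc hlay ⟨b, h, rfl⟩ heps
    have h1 : lbl G χ a (χ s(a,b)) = false := by
      rw [lbl, hbb, Bool.xor_self]
    refine ⟨h1, ?_⟩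
    have hcd := cnt_edge hcyc h (χ s(a,b))
    rw [if_pos rfl] at hcd
    rw [lbl, ← hrep, hcd, hbb]
    have : ∀ x : ZMod 2, xor (decide (x = 1)) (decide (x + 1 = 1)) = true := by decide
    exact this _

lemma ones_flip {m : ℕ} {x y : Fin m → Bool} {i₀ : Fin m} (hne : ∀ j, j ≠ i₀ → x j = y j)
    (hx : x i₀ = false) (hy : y i₀ = true) : onesCount y = onesCount x + 1 := by
  unfold onesCount
  have hins : (Finset.univ.filter fun i => y i = true) =
      insert i₀ (Finset.univ.filter fun i => x i = true) := by
    ext j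
    simp only [Finset.mem_filter, Finset.mem_univ, true_and, Finset.mem_insert]
    constructor
    · intro hj
      rcases eq_or_ne j i₀ with rfl | hji
      · exact Or.inl rfl
      · exact Or.inr (by rw [hne j hji]; exact hj)
    · rintro (rfl | hj)
      · exact hy
      · rcases eq_or_ne j i₀ with rfl | hji
        · exact hy
        · rw [← hne j hji]; exact hj
  rw [hins, Finset.card_insert_of_notMem (by simp [hx])]

include hcyc hlay in
lemma ones_eps {m : ℕ} (hb : ∀ e ∈ G.edgeSet, χ e < m) (v : V) :
    onesCount (fun i : Fin m => lbl G χ v ↑i) =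
      onesCount (fun i : Fin m => lbl G χ (rep G v) ↑i) + (if Eps G v = 0 then 0 else 1) := by
  have step : ∀ (x x1 : V), G.Adj x x1 →
      onesCount (fun i : Fin m => lbl G χ x ↑i) =
        onesCount (fun i : Fin m => lbl G χ (rep G x) ↑i) + (if Eps G x = 0 then 0 else 1) →
      onesCount (fun i : Fin m => lbl G χ x1 ↑i) =
        onesCount (fun i : Fin m => lbl G χ (rep G x1) ↑i) + (if Eps G x1 = 0 then 0 else 1) := by
    intro x x1 h hP
    have hrep : rep G x = rep G x1 := rep_eq_of_reachable h.reachable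
    have hc : χ s(x,x1) < m := hb _ (G.mem_edgeSet.mpr h)
    set i₀ : Fin m := ⟨χ s(x,x1), hc⟩ with hi₀
    obtain ⟨hd, hne, hor⟩ := lbl_edge hcyc hlay h
    have heps1 : Eps G x1 = Eps G x + 1 := eps_edge hcyc h
    rcases eq_or_ne (Eps G x) 0 with heps | heps
    · obtain ⟨hfalse, htrue⟩ := hor heps
      have hflip : onesCount (fun i : Fin m => lbl G χ x1 ↑i) =
          onesCount (fun i : Fin m => lbl G χ x ↑i) + 1 := by
        apply ones_flip (i₀ := i₀)
        · intro j hj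
          exact hd ↑j (by simpa [hi₀, Fin.ext_iff] using hj)
        · exact hfalse
        · exact htrue
      have heps1' : Eps G x1 ≠ 0 := by rw [heps1, heps]; decide
      rw [hflip, hP, ← hrep, if_pos heps, if_neg heps1']
    · have heps0 : Eps G x = 1 := by
        have : ∀ z : ZMod 2, z ≠ 0 → z = 1 := by decide
        exact this _ heps
      have heps1' : Eps G x1 = 0 := by rw [heps1, heps0]; decide
      have hsw : χ s(x1, x) = χ s(x,x1) := by rw [Sym2.eq_swap]
      obtain ⟨hd', hne', hor'⟩ := lbl_edge hcyc hlay h.symm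
      obtain ⟨hfalse, htrue⟩ := hor' heps1'
      rw [hsw] at hfalse htrue
      have hflip : onesCount (fun i : Fin m => lbl G χ x ↑i) =
          onesCount (fun i : Fin m => lbl G χ x1 ↑i) + 1 := by
        apply ones_flip (i₀ := i₀)
        · intro j hj
          exact (hd ↑j (by simpa [hi₀, Fin.ext_iff] using hj)).symm
        · exact hfalse
        · exact htrue
      rw [hflip] at hP
      rw [← hrep, if_neg heps, if_pos heps1'] at *
      omega
  have walkind : ∀ (x y : V) (w : G.Walk x y),
      onesCount (fun i : Fin m => lbl G χ x ↑i) =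
        onesCount (fun i : Fin m => lbl G χ (rep G x) ↑i) + (if Eps G x = 0 then 0 else 1) →
      onesCount (fun i : Fin m => lbl G χ y ↑i) =
        onesCount (fun i : Fin m => lbl G χ (rep G y) ↑i) + (if Eps G y = 0 then 0 else 1) := by
    intro x y w
    induction w with
    | nil => exact id
    | cons h q IH => exact fun hP => IH (step _ _ h hP)
  apply walkind (rep G v) v (theWalk G v)
  rw [rep_rep, if_pos (eps_rep (χ := χ) hcyc v), add_zero]

include hcyc in
lemma inj_comp (hpath : ∀ (u v : V) (w : G.Walk u v), w.IsPath → 0 < w.length →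
      ∃ c : ℕ, Odd ((w.edges.map χ).count c))
    {u v : V} (hcnt : ∀ c, Cnt G χ u c = Cnt G χ v c) (hre : G.Reachable u v) : u = v := by
  by_contra hne
  obtain ⟨w0⟩ := hre
  set p := w0.toPath with hp
  have hlen : 0 < p.val.length := by
    rcases Nat.eq_zero_or_pos p.val.length with h0 | h0
    · exact absurd (SimpleGraph.Walk.eq_of_length_eq_zero h0) hne
    · exact h0
  obtain ⟨c, hodd⟩ := hpath u v p.val p.property hlen
  have h2 := (key_rel (χ := χ) hcyc p.val).2 c
  have hcast : (((p.val.edges.map χ).count c : ℕ) : ZMod 2) = 1 := by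
    rcases Nat.odd_iff.mp hodd with hm
    have : (((p.val.edges.map χ).count c : ℕ) : ZMod 2) =
        ((((p.val.edges.map χ).count c) % 2 : ℕ) : ZMod 2) := by
      rw [ZMod.natCast_mod]
    rw [this, hm]
    rfl
  rw [hcast, hcnt c] at h2
  have : ∀ z : ZMod 2, z ≠ z + 1 := by decide
  exact this _ h2

end Hyps
end LayeredAux5

namespace LayeredAux6
open LayeredAux LayeredAux2 LayeredAux3 LayeredAux4 LayeredAux5

lemma card_fin_lt (N t : ℕ) (h : t ≤ N) :
    ((Finset.univ : Finset (Fin N)).filter fun j : Fin N => (j : ℕ) < t).card = t := by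
  have : ((Finset.univ : Finset (Fin N)).filter fun j : Fin N => (j : ℕ) < t) =
      (Finset.univ : Finset (Fin t)).map (Fin.castLEEmb h) := by
    ext j
    simp only [Finset.mem_filter, Finset.mem_univ, true_and, Finset.mem_map]
    constructor
    · intro hj
      exact ⟨⟨(j : ℕ), hj⟩, by simp [Fin.castLEEmb, Fin.castLE, Fin.ext_iff]⟩
    · rintro ⟨i, hi⟩
      rw [← hi]
      simpa [Fin.castLEEmb, Fin.castLE] using i.isLt
  rw [this, Finset.card_map, Finset.card_univ, Fintype.card_fin]

lemma card_filter_equiv {α β : Type*} [Fintype α] [Fintype β] (e : α ≃ β) (p : β → Prop)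
    [DecidablePred p] [DecidablePred (fun a => p (e a))] :
    ((Finset.univ : Finset β).filter p).card =
      ((Finset.univ : Finset α).filter fun a => p (e a)).card := by
  apply Finset.card_bij' (fun b _ => e.symm b) (fun a _ => e a)
  · intro b hb
    simp only [Finset.mem_filter, Finset.mem_univ, true_and] at hb ⊢
    rwa [Equiv.apply_symm_apply]
  · intro a ha
    simp only [Finset.mem_filter, Finset.mem_univ, true_and] at ha ⊢
    exact ha
  · intro b _; exact Equiv.apply_symm_apply e b
  · intro a _; exact Equiv.symm_apply_apply e a

lemma zmod_eq_of_decide {x y : ZMod 2} (h : decide (x = 1) = decide (y = 1)) : x = y := by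
  revert h; revert x y; decide

lemma bool_xor_cancel {b x y : Bool} (h : xor b x = xor b y) : x = y := by
  revert h; revert b x y; decide

end LayeredAux6


open LayeredAux LayeredAux2 LayeredAux3 LayeredAux4 LayeredAux5 LayeredAux6 in
/-- A graph admitting a layered edge-labelling embeds into a layer
of some hypercube with the labels as edge directions. -/
theorem embedding_of_layered_labelling {V : Type} [Fintype V]
    (G : SimpleGraph V) (χ : Sym2 V → ℕ) (hχ : IsLayeredLabelling G χ) :
    ∃ (n k : ℕ) (f : V → layerSet n k), IsEmbedding G (layer n k) f ∧
      ∀ x y : V, G.Adj x y →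
        ∃ i : Fin n, (i : ℕ) = χ s(x, y) ∧ (f x).1 i ≠ (f y).1 i := by
  classical
  obtain ⟨⟨hcyc, hpath⟩, hlay⟩ := hχ
  set m : ℕ := (Finset.univ : Finset (Sym2 V)).sup χ + 1 with hm
  have hbm : ∀ e : Sym2 V, χ e < m :=
    fun e => Nat.lt_succ_of_le (Finset.le_sup (Finset.mem_univ e))
  set N : ℕ := Fintype.card (V × Fin (m+1)) with hN
  set eI : (Fin m ⊕ (V × Fin (m+1))) ≃ Fin (m + N) :=
    (Equiv.sumCongr (Equiv.refl (Fin m)) (Fintype.equivFin (V × Fin (m+1)))).trans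
      finSumFinEquiv with heI
  set s0 : V → ℕ := fun v => onesCount (fun i : Fin m => lbl G χ (rep G v) ↑i) with hs0
  have hs0le : ∀ v, s0 v ≤ m := by
    intro v
    rw [hs0]
    calc (Finset.univ.filter fun i : Fin m => lbl G χ (rep G v) ↑i = true).card
        ≤ (Finset.univ : Finset (Fin m)).card := Finset.card_filter_le _ _
      _ = m := by simp
  set pad : V → ℕ := fun v => (m + 1) - s0 v with hpad
  have hpad1 : ∀ v, 1 ≤ pad v := by
    intro v; have := hs0le v; simp only [hpad]; omega
  have hpadle : ∀ v, pad v ≤ m + 1 := by intro v; simp only [hpad]; omega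
  set F : V → (Fin m ⊕ (V × Fin (m+1))) → Bool := fun v =>
    Sum.elim (fun i => lbl G χ v ↑i)
      (fun bj => decide (bj.1 = rep G v ∧ (bj.2 : ℕ) < pad v)) with hF
  set f0 : V → Fin (m + N) → Bool := fun v t => F v (eI.symm t) with hf0
  have hrep_adj : ∀ {a b : V}, G.Adj a b → rep G a = rep G b :=
    fun h => rep_eq_of_reachable h.reachable
  have hs0rep : ∀ {a b : V}, rep G a = rep G b → s0 a = s0 b := by
    intro a b h; rw [hs0]; simp only; rw [h]
  have hpadrep : ∀ {a b : V}, rep G a = rep G b → pad a = pad b := by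
    intro a b h; rw [hpad]; simp only; rw [hs0rep h]
  have honesc : ∀ (M : ℕ) (x : Fin M → Bool),
      onesCount x = ∑ i : Fin M, (if x i = true then 1 else 0) := by
    intro M x
    exact Finset.card_filter _ _
  -- ones count computation
  have honesI : ∀ v, onesCount (f0 v) =
      onesCount (fun i : Fin m => lbl G χ v ↑i) + pad v := by
    intro v
    rw [honesc, ← Equiv.sum_comp eI (fun t => if f0 v t = true then 1 else 0)]
    have hs : ∀ a, (if f0 v (eI a) = true then (1:ℕ) else 0) = (if F v a = true then 1 else 0) := by
      intro a; rw [hf0]; simp only [Equiv.symm_apply_apply]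
    rw [Finset.sum_congr rfl (fun a _ => hs a), Fintype.sum_sum_type]
    congr 1
    · rw [honesc]
      apply Finset.sum_congr rfl
      intro i _
      rw [hF]
      simp only [Sum.elim_inl]
      congr
    · rw [Fintype.sum_prod_type]
      have hsplit : ∀ (b : V) (j : Fin (m+1)),
          (if F v (Sum.inr (b, j)) = true then (1:ℕ) else 0) =
          (if b = rep G v then (if (j:ℕ) < pad v then 1 else 0) else 0) := by
        intro b j
        rw [hF]
        simp only [Sum.elim_inr, decide_eq_true_eq]
        by_cases h1 : b = rep G v <;> by_cases h2 : (j:ℕ) < pad v <;> simp [h1, h2]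
      rw [Finset.sum_congr rfl (fun b _ => Finset.sum_congr rfl (fun j _ => hsplit b j))]
      have : ∀ b : V, (∑ j : Fin (m+1), if b = rep G v then (if (j:ℕ) < pad v then (1:ℕ) else 0) else 0)
          = (if b = rep G v then (pad v) else 0) := by
        intro b
        by_cases h1 : b = rep G v
        · simp only [h1, if_true]
          rw [← Finset.card_filter]
          exact card_fin_lt (m+1) (pad v) (hpadle v)
        · simp [h1]
      rw [Finset.sum_congr rfl (fun b _ => this b)]
      rw [Finset.sum_ite_eq' Finset.univ (rep G v) (fun _ => pad v)]
      simp
  have hones : ∀ v, onesCount (f0 v) = (m+1) + (if Eps G v = 0 then 0 else 1) := by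
    intro v
    rw [honesI v, ones_eps hcyc hlay (fun e _ => hbm e) v]
    have h1 := hs0le v
    have hgoal : onesCount (fun i : Fin m => lbl G χ (rep G v) ↑i) = s0 v := by rw [hs0]
    rw [hgoal]
    simp only [hpad]
    omega
  have hmem : ∀ v, f0 v ∈ layerSet (m + N) (m + 1) := by
    intro v
    rcases eq_or_ne (Eps G v) 0 with h | h
    · left; rw [hones v, if_pos h]
    · right; rw [hones v, if_neg h]
  -- edge analysis
  have hedge : ∀ {x y : V} (h : G.Adj x y) (t : Fin m ⊕ (V × Fin (m+1))),
      (F x t ≠ F y t) ↔ t = Sum.inl ⟨χ s(x,y), hbm _⟩ := by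
    intro x y h t
    obtain ⟨hd, hne, hor⟩ := lbl_edge hcyc hlay h
    cases t with
    | inl j =>
      rw [hF]
      simp only [Sum.elim_inl, Sum.inl.injEq]
      constructor
      · intro hj
        by_contra hji
        exact hj (hd ↑j (by simpa [Fin.ext_iff] using hji))
      · intro hj
        rw [hj]
        exact hne
    | inr bj =>
      rw [hF]
      simp only [Sum.elim_inr]
      constructor
      · intro hj
        exfalso
        apply hj
        rw [hrep_adj h, hpadrep (hrep_adj h)]
      · intro hj; exact absurd hj (by simp)
  have hdist : ∀ {x y : V}, G.Adj x y → hammingDist (f0 x) (f0 y) = 1 := by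
    intro x y h
    show (Finset.univ.filter fun t => f0 x t ≠ f0 y t).card = 1
    rw [Finset.card_filter, ← Equiv.sum_comp eI (fun t => if f0 x t ≠ f0 y t then 1 else 0)]
    have hs : ∀ a, (if f0 x (eI a) ≠ f0 y (eI a) then (1:ℕ) else 0) =
        (if a = Sum.inl ⟨χ s(x,y), hbm _⟩ then 1 else 0) := by
      intro a
      have h1 : (f0 x (eI a) ≠ f0 y (eI a)) ↔ (F x a ≠ F y a) := by
        rw [hf0]; simp only [Equiv.symm_apply_apply]
      by_cases h2 : a = Sum.inl ⟨χ s(x,y), hbm _⟩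
      · rw [if_pos h2, if_pos (h1.mpr ((hedge h a).mpr h2))]
      · rw [if_neg h2, if_neg (fun hc => h2 ((hedge h a).mp (h1.mp hc)))]
    rw [Finset.sum_congr rfl (fun a _ => hs a)]
    rw [Finset.sum_ite_eq' Finset.univ _ (fun _ => (1:ℕ))]
    simp
  -- injectivity
  have hinj : Function.Injective f0 := by
    intro u v h
    have hFuv : ∀ a, F u a = F v a := by
      intro a
      have := congrFun h (eI a)
      rw [hf0] at this
      simpa only [Equiv.symm_apply_apply] using this
    have hrep_uv : rep G u = rep G v := by
      have h1 := hFuv (Sum.inr (rep G u, ⟨0, by omega⟩))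
      rw [hF] at h1
      simp only [Sum.elim_inr] at h1
      rw [decide_eq_decide] at h1
      exact (h1.mp ⟨trivial, hpad1 u⟩).1
    have hcnt : ∀ c, Cnt G χ u c = Cnt G χ v c := by
      intro c
      rcases lt_or_ge c m with hc | hc
      · have h1 := hFuv (Sum.inl ⟨c, hc⟩)
        rw [hF] at h1
        simp only [Sum.elim_inl] at h1
        rw [lbl, lbl, hrep_uv] at h1
        exact zmod_eq_of_decide (bool_xor_cancel h1)
      · have hz : ∀ w : V, Cnt G χ w c = 0 := by
          intro w
          rw [Cnt]
          have : ((theWalk G w).edges.map χ).count c = 0 := by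
            rw [List.count_eq_zero]
            intro hmem'
            obtain ⟨e, _, hce⟩ := List.mem_map.mp hmem'
            have := hbm e
            omega
          rw [this]
          simp
        rw [hz u, hz v]
    have hre : G.Reachable u v :=
      ((reachable_rep G u).symm.trans (hrep_uv ▸ reachable_rep G v))
    exact inj_comp hcyc hpath hcnt hre
  refine ⟨m + N, m + 1, fun v => ⟨f0 v, hmem v⟩, ⟨?_, ?_⟩, ?_⟩
  · intro u v huv
    exact hinj (congrArg Subtype.val huv)
  · intro u v huv
    show (cube (m+N)).Adj (f0 u) (f0 v)
    show hammingDist (f0 u) (f0 v) = 1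
    exact hdist huv
  · intro x y hxy
    refine ⟨eI (Sum.inl ⟨χ s(x,y), hbm _⟩), ?_, ?_⟩
    · rw [heI]
      simp only [Equiv.trans_apply, Equiv.sumCongr_apply, Sum.map_inl, Equiv.refl_apply,
        finSumFinEquiv_apply_left, Fin.coe_castAdd]
    · show f0 x _ ≠ f0 y _
      rw [hf0]
      simp only [Equiv.symm_apply_apply]
      exact (hedge hxy _).mpr rfl
end

section
/- Let T be a finite tree, let P be a set of unordered pairs of vertices of T, and let t be a positive integer such that (T, P) is t-distance-separating. Then there exist a finite tree T' and a set P' of unordered pairs of vertices of T' such that (T', P') is (t+2)-distance-separating. -/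
open SimpleGraph

section HammingAux
open Finset


lemma hd_reindex {α β : Type*} [Fintype α] [Fintype β] (e : α ≃ β) (x y : β → Bool) :
    hammingDist (x ∘ e) (y ∘ e) = hammingDist x y := by
  unfold hammingDist
  exact Finset.card_nbij e (by intro a ha; simpa using ha) (e.injective.injOn) (fun b hb => ⟨e.symm b, by simpa using hb⟩)

lemma hd_sum {α β : Type*} [Fintype α] [Fintype β] (x y : α ⊕ β → Bool) :
    hammingDist x y = hammingDist (x ∘ Sum.inl) (y ∘ Sum.inl) + hammingDist (x ∘ Sum.inr) (y ∘ Sum.inr) := by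
  unfold hammingDist
  rw [← Finset.card_disjSum]
  congr 1
  ext i
  cases i <;> simp [Finset.mem_disjSum]


lemma exists_flip {n : ℕ} {x y : Fin n → Bool} (h : hammingDist x y = 1) :
    ∃ a, y = Function.update x a (!x a) := by
  unfold hammingDist at h
  rw [Finset.card_eq_one] at h
  obtain ⟨a, ha⟩ := h
  refine ⟨a, funext fun i => ?_⟩
  by_cases hi : i = a
  · subst hi
    have : x i ≠ y i := by
      have : i ∈ ({i} : Finset (Fin n)) := Finset.mem_singleton_self i
      rw [← ha] at this; simpa using this
    rw [Function.update_self]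
    revert this; cases x i <;> cases y i <;> simp
  · have : ¬ (x i ≠ y i) := by
      intro hne
      have : i ∈ ({a} : Finset (Fin n)) := by rw [← ha]; simp [hne]
      simp at this; exact hi this
    rw [Function.update_of_ne hi]
    exact (not_not.mp this).symm

lemma hd_update_update {n : ℕ} {A B : Fin n → Bool} {a b : Fin n} (hab : a ≠ b)
    (ha : A a = B a) (hb : A b = B b) :
    hammingDist (Function.update A a (!A a)) (Function.update B b (!B b))
      = hammingDist A B + 2 := by
  unfold hammingDist
  have key : (Finset.univ.filter fun i => Function.update A a (!A a) i ≠ Function.update B b (!B b) i)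
      = insert a (insert b (Finset.univ.filter fun i => A i ≠ B i)) := by
    ext i
    simp only [Finset.mem_insert, Finset.mem_filter, Finset.mem_univ, true_and]
    by_cases hia : i = a
    · subst hia
      simp [Function.update_self, Function.update_of_ne hab, ha]
    · by_cases hib : i = b
      · subst hib
        rw [Function.update_of_ne hia, Function.update_self, hb]
        simp [hia]
      · simp [Function.update_of_ne hia, Function.update_of_ne hib, hia, hib]
  rw [show (Finset.univ.filter fun i => Function.update A a (!A a) i ≠ Function.update B b (!B b) i) = insert a (insert b (Finset.univ.filter fun i => A i ≠ B i)) from key]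
  rw [Finset.card_insert_of_notMem (by simp [hab, ha]),
    Finset.card_insert_of_notMem (by simp [hb])]


lemma hd_false_ind {α : Type*} [Fintype α] [DecidableEq α] (w : α) :
    hammingDist (fun _ => false) (fun w' => if w' = w then true else false) = 1 := by
  unfold hammingDist
  rw [show (Finset.univ.filter fun w' =>
      (fun _ => false) w' ≠ (fun w' => if w' = w then true else false) w') = {w} by
    ext w'
    by_cases hw : w' = w <;> simp [hw]]
  exact Finset.card_singleton w

lemma hd_ind_ind {α : Type*} [Fintype α] [DecidableEq α] {w₁ w₂ : α} (hne : w₁ ≠ w₂) :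
    hammingDist (fun w' => if w' = w₁ then true else false)
      (fun w' => if w' = w₂ then true else false) = 2 := by
  unfold hammingDist
  rw [show (Finset.univ.filter fun w' =>
      (fun w' => if w' = w₁ then true else false) w' ≠ (fun w' => if w' = w₂ then true else false) w') = {w₁, w₂} by
    ext w'
    by_cases h1 : w' = w₁ <;> by_cases h2 : w' = w₂ <;> simp [h1, h2] <;> simp_all]
  rw [Finset.card_insert_of_notMem (by simp [hne]), Finset.card_singleton]

end HammingAux



section PendantAux
variable {V : Type} (T : SimpleGraph V) (m : ℕ)

def pendAdj : (V ⊕ V × Fin m) → (V ⊕ V × Fin m) → Prop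
  | Sum.inl u, Sum.inl v => T.Adj u v
  | Sum.inl u, Sum.inr w => w.1 = u
  | Sum.inr w, Sum.inl u => w.1 = u
  | Sum.inr _, Sum.inr _ => False

def pend : SimpleGraph (V ⊕ V × Fin m) where
  Adj := pendAdj T m
  symm := by
    constructor
    rintro (u|w) (v|w') h
    · exact SimpleGraph.adj_symm T h
    · exact h
    · exact h
    · exact h.elim
  loopless := by
    constructor
    rintro (u|w) h
    · exact T.irrefl (v := u) h
    · exact h.elim

variable {T m}

@[simp] lemma pend_adj_inl_inl {u v : V} : (pend T m).Adj (Sum.inl u) (Sum.inl v) ↔ T.Adj u v := Iff.rfl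
@[simp] lemma pend_adj_inl_inr {u : V} {w : V × Fin m} :
    (pend T m).Adj (Sum.inl u) (Sum.inr w) ↔ w.1 = u := Iff.rfl
@[simp] lemma pend_adj_inr_inl {u : V} {w : V × Fin m} :
    (pend T m).Adj (Sum.inr w) (Sum.inl u) ↔ w.1 = u := Iff.rfl
@[simp] lemma pend_adj_inr_inr {w w' : V × Fin m} :
    ¬ (pend T m).Adj (Sum.inr w) (Sum.inr w') := fun h => h

def pendHom : T →g pend T m := ⟨Sum.inl, fun h => h⟩

lemma pend_project : ∀ {a b} (p : (pend T m).Walk a b)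
    (hs : ∀ x ∈ p.support, ∃ w, x = Sum.inl w) {u v : V} (ha : a = Sum.inl u)
    (hb : b = Sum.inl v),
    ∃ p₀ : T.Walk u v, p.copy ha hb = p₀.map (pendHom (T := T) (m := m)) := by
  intro a b p
  induction p with
  | nil =>
    intro hs u v ha hb
    subst ha
    obtain rfl : u = v := Sum.inl_injective hb
    exact ⟨Walk.nil, by simp; rfl⟩
  | @cons a c b h q ih =>
    intro hs u v ha hb
    subst ha
    obtain ⟨w, rfl⟩ := hs c (by simp)
    have hadj : T.Adj u w := h
    obtain ⟨q₀, hq⟩ := ih (fun x hx => hs x (by simp [hx])) rfl hb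
    refine ⟨Walk.cons hadj q₀, ?_⟩
    rw [Walk.map_cons, Walk.copy_cons, hq]
    rfl

lemma pend_no_cycle_at_inr {w : V × Fin m} (c : (pend T m).Walk (Sum.inr w) (Sum.inr w)) :
    ¬ c.IsCycle := by
  intro hc
  cases c with
  | nil => exact hc.ne_nil rfl
  | @cons _ x _ h q =>
    obtain (x|w') := x
    · have hx : w.1 = x := h
      have hmem : s(Sum.inr w, Sum.inl x) ∈ q.edges := by
        cases hrev : q.reverse with
        | @cons _ y _ h' q' =>
          have hy : ∃ u, y = Sum.inl u := by
            obtain (u|w'') := y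
            · exact ⟨u, rfl⟩
            · exact absurd h' (pend_adj_inr_inr)
          obtain ⟨u, rfl⟩ := hy
          have hu : w.1 = u := h'
          have : s(Sum.inr w, Sum.inl u) ∈ q.reverse.edges := by
            rw [hrev]; simp
          rw [Walk.edges_reverse, List.mem_reverse] at this
          rw [← hu, hx] at this
          exact this
      have := hc.edges_nodup
      rw [Walk.edges_cons] at this
      exact (List.nodup_cons.mp this).1 hmem
    · exact absurd h (pend_adj_inr_inr)

lemma pend_isAcyclic (hT : T.IsAcyclic) : (pend T m).IsAcyclic := by
  classical
  intro v c hc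
  obtain hs | hs := Classical.em (∀ x ∈ c.support, ∃ w, x = Sum.inl w)
  · obtain (u|w) := v
    · obtain ⟨c₀, hc₀⟩ := pend_project c hs rfl rfl
      rw [Walk.copy_rfl_rfl] at hc₀
      rw [hc₀] at hc
      exact hT c₀ ((Walk.map_isCycle_iff_of_injective (f := pendHom) Sum.inl_injective).mp hc)
    · exact pend_no_cycle_at_inr c hc
  · push_neg at hs
    obtain ⟨x, hx, hxl⟩ := hs
    obtain (u|w) := x
    · exact hxl u rfl
    · exact pend_no_cycle_at_inr _ (hc.rotate hx)

lemma pend_connected (hT : T.Connected) : (pend T m).Connected := by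
  have hne : Nonempty (V ⊕ V × Fin m) := ⟨Sum.inl hT.nonempty.some⟩
  rw [SimpleGraph.connected_iff]
  refine ⟨fun a b => ?_, hne⟩
  have key : ∀ x : V ⊕ V × Fin m, ∃ u : V, (pend T m).Reachable x (Sum.inl u) := by
    rintro (u|w)
    · exact ⟨u, Reachable.refl _⟩
    · exact ⟨w.1, Adj.reachable (by simp)⟩
  obtain ⟨u, hu⟩ := key a
  obtain ⟨v, hv⟩ := key b
  have : T.Reachable u v := hT.preconnected u v
  exact hu.trans ((this.map (pendHom)).trans hv.symm)

lemma pend_isTree (hT : T.IsTree) : (pend T m).IsTree :=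
  ⟨pend_connected hT.isConnected, pend_isAcyclic hT.IsAcyclic⟩




section CubeFAux
variable {V : Type} [DecidableEq V] {n m : ℕ}

/-- The extended cube embedding map. -/
def pendF (f : V → Fin n → Bool) : (V ⊕ V × Fin m) → (Fin n ⊕ V × Fin m) → Bool
  | Sum.inl v => Sum.elim (f v) (fun _ => false)
  | Sum.inr w => Sum.elim (f w.1) (fun w' => if w' = w then true else false)

end CubeFAux

/-- From a `t`-distance-separating pair `(T, P)` with `T` a tree one
can construct a `(t+2)`-distance-separating pair `(T', P')` with `T'` a tree. -/
theorem distSeparating_recursion {V : Type} [Fintype V]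
    (T : SimpleGraph V) (hT : T.IsTree) (P : Set (Sym2 V)) (t : ℕ) (ht : 0 < t)
    (h : DistSeparating T P t) :
    ∃ (V' : Type) (_ : Fintype V') (T' : SimpleGraph V'), T'.IsTree ∧
      ∃ P' : Set (Sym2 V'), DistSeparating T' P' (t + 2) := by
  classical
  obtain ⟨⟨n, f, ⟨hfinj, hfadj⟩, hfP⟩, hlayer⟩ := h
  set m := t + 4 with hm
  refine ⟨V ⊕ V × Fin m, inferInstance, pend T m, pend_isTree hT, ?_⟩
  refine ⟨{e | ∃ x y i j, s(x, y) ∈ P ∧ e = s(Sum.inr (x, i), Sum.inr (y, j))}, ?_, ?_⟩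
  · -- cube embedding part
    set N := Fintype.card (Fin n ⊕ V × Fin m) with hN
    set e : (Fin n ⊕ V × Fin m) ≃ Fin N := Fintype.equivFin _ with he
    set f' : (V ⊕ V × Fin m) → Fin N → Bool := fun v j => pendF f v (e.symm j) with hf'
    have hcomp : ∀ u v, hammingDist (f' u) (f' v) = hammingDist (pendF (m := m) f u) (pendF f v) := by
      intro u v
      have := hd_reindex (e.symm) (pendF (m := m) f u) (pendF f v)
      exact this
    have hxyne : ∀ x y : V, s(x, y) ∈ P → x ≠ y := by
      intro x y hP heq
      subst heq
      have := hfP x x hP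
      rw [hammingDist_self] at this
      omega
    refine ⟨N, f', ⟨?_, ?_⟩, ?_⟩
    · -- injective
      intro u v huv
      have hFuv : pendF (m := m) f u = pendF f v := by
        funext i
        have := congrFun huv (e i)
        simpa [hf', Equiv.symm_apply_apply] using this
      match u, v with
      | Sum.inl u, Sum.inl v =>
        have : f u = f v := by
          funext j
          exact congrFun hFuv (Sum.inl j)
        rw [hfinj this]
      | Sum.inl u, Sum.inr w =>
        have := congrFun hFuv (Sum.inr w)
        simp [pendF] at this
      | Sum.inr w, Sum.inl u =>
        have := congrFun hFuv (Sum.inr w)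
        simp [pendF] at this
      | Sum.inr w, Sum.inr w' =>
        have := congrFun hFuv (Sum.inr w)
        simp [pendF] at this
        rw [this]
    · -- adjacency
      intro u v huv
      show hammingDist (f' u) (f' v) = 1
      rw [hcomp]
      match u, v, huv with
      | Sum.inl u, Sum.inl v, huv =>
        have : T.Adj u v := huv
        rw [hd_sum]
        simp only [pendF, Sum.elim_comp_inl, Sum.elim_comp_inr]
        rw [hammingDist_self, hfadj u v this]
      | Sum.inl u, Sum.inr w, huv =>
        have hw : w.1 = u := huv
        rw [hd_sum]
        simp only [pendF, Sum.elim_comp_inl, Sum.elim_comp_inr]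
        rw [hw, hammingDist_self, hd_false_ind]
      | Sum.inr w, Sum.inl u, huv =>
        have hw : w.1 = u := huv
        rw [hd_sum]
        simp only [pendF, Sum.elim_comp_inl, Sum.elim_comp_inr]
        rw [hw, hammingDist_self, hammingDist_comm, hd_false_ind]
    · -- pairs at distance t+2
      intro xx yy hp
      obtain ⟨x, y, i, j, hP, heq⟩ := hp
      have hxy : x ≠ y := hxyne x y hP
      have hwij : ((x, i) : V × Fin m) ≠ (y, j) := fun hh => hxy (congrArg Prod.fst hh)
      have key : hammingDist (f' (Sum.inr (x, i))) (f' (Sum.inr (y, j))) = t + 2 := by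
        rw [hcomp, hd_sum]
        simp only [pendF, Sum.elim_comp_inl, Sum.elim_comp_inr]
        rw [hfP x y hP, hd_ind_ind hwij]
      rw [Sym2.eq_iff] at heq
      obtain ⟨rfl, rfl⟩ | ⟨rfl, rfl⟩ := heq
      · exact key
      · rw [hammingDist_comm]
        exact key
  · -- layer part
    intro n' k g hg
    obtain ⟨ginj, gadj⟩ := hg
    have hg0 : IsEmbedding T (layer n' k) (fun v => g (Sum.inl v)) :=
      ⟨fun u v huv => Sum.inl_injective (ginj huv), fun u v huv => gadj _ _ huv⟩
    obtain ⟨x, y, hP, hdist⟩ := hlayer n' k _ hg0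
    set A := (g (Sum.inl x)).1 with hA
    set B := (g (Sum.inl y)).1 with hB
    have hflipx : ∀ i : Fin m, ∃ a, (g (Sum.inr (x, i))).1 = Function.update A a (!A a) := by
      intro i
      refine exists_flip ?_
      exact gadj (Sum.inl x) (Sum.inr (x, i)) rfl
    have hflipy : ∀ j : Fin m, ∃ b, (g (Sum.inr (y, j))).1 = Function.update B b (!B b) := by
      intro j
      refine exists_flip ?_
      exact gadj (Sum.inl y) (Sum.inr (y, j)) rfl
    choose c hc using hflipx
    choose d hd2 using hflipy
    have hcinj : Function.Injective c := by
      intro i i' hii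
      have : g (Sum.inr (x, i)) = g (Sum.inr (x, i')) := by
        apply Subtype.ext
        rw [hc i, hc i', hii]
      have := ginj this
      exact (Prod.mk.injEq _ _ _ _).mp (Sum.inr_injective this) |>.2
    have hdinj : Function.Injective d := by
      intro j j' hjj
      have : g (Sum.inr (y, j)) = g (Sum.inr (y, j')) := by
        apply Subtype.ext
        rw [hd2 j, hd2 j', hjj]
      have := ginj this
      exact (Prod.mk.injEq _ _ _ _).mp (Sum.inr_injective this) |>.2
    set D : Finset (Fin n') := Finset.univ.filter (fun a => A a ≠ B a) with hD
    have hDcard : D.card = t + 2 := hdist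
    have hSc : (Finset.univ.image c).card = m := by
      rw [Finset.card_image_of_injective _ hcinj, Finset.card_univ, Fintype.card_fin]
    have hSd : (Finset.univ.image d).card = m := by
      rw [Finset.card_image_of_injective _ hdinj, Finset.card_univ, Fintype.card_fin]
    have h1 : 2 ≤ ((Finset.univ.image c) \ D).card := by
      have := Finset.le_card_sdiff D (Finset.univ.image c)
      omega
    have h2 : 1 ≤ (((Finset.univ.image d) \ D).erase (((Finset.univ.image c) \ D).min' (by rw [← Finset.card_pos]; omega))).card := by
      have h3 : 2 ≤ ((Finset.univ.image d) \ D).card := by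
        have := Finset.le_card_sdiff D (Finset.univ.image d)
        omega
      have := Finset.pred_card_le_card_erase
        (s := (Finset.univ.image d) \ D)
        (a := ((Finset.univ.image c) \ D).min' (by rw [← Finset.card_pos]; omega))
      omega
    set a := ((Finset.univ.image c) \ D).min' (by rw [← Finset.card_pos]; omega) with ha
    have hamem : a ∈ (Finset.univ.image c) \ D := Finset.min'_mem _ _
    obtain ⟨b, hbmem⟩ := Finset.card_pos.mp (by omega : 0 < (((Finset.univ.image d) \ D).erase a).card)
    have hba : b ≠ a := (Finset.mem_erase.mp hbmem).1
    have hbmem' : b ∈ (Finset.univ.image d) \ D := (Finset.mem_erase.mp hbmem).2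
    obtain ⟨i₀, -, hi₀⟩ := Finset.mem_image.mp (Finset.mem_sdiff.mp hamem).1
    obtain ⟨j₀, -, hj₀⟩ := Finset.mem_image.mp (Finset.mem_sdiff.mp hbmem').1
    have hagood : A a = B a := by
      have := (Finset.mem_sdiff.mp hamem).2
      simp [hD] at this
      exact this
    have hbgood : A b = B b := by
      have := (Finset.mem_sdiff.mp hbmem').2
      simp [hD] at this
      exact this
    refine ⟨Sum.inr (x, i₀), Sum.inr (y, j₀), ⟨x, y, i₀, j₀, hP, rfl⟩, ?_⟩
    rw [hc i₀, hd2 j₀, hi₀, hj₀, hd_update_update (fun hh => hba hh.symm) hagood hbgood, hdist]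
end PendantAux
end

section
/- Let P6 be the path with vertices v0, v1, ..., v6 and edges v_i v_{i+1} for 0 ≤ i ≤ 5, and let P be the set of pairs {{v0, v4}, {v1, v5}, {v2, v6}}. Then (P6, P) is 2-distance-separating. -/
open SimpleGraph

/-! ### Auxiliary machinery for the proof -/

/-- The explicit embedding of `P6` into `Q_3`. -/
def f7 : Fin 7 → Fin 3 → Bool :=
  ![![false,false,false], ![true,false,false], ![true,true,false], ![false,true,false],
    ![false,true,true], ![true,true,true], ![true,false,true]]

/-- Flip one coordinate of a hypercube vertex. -/
def flip1 {n : ℕ} (a : Fin n → Bool) (c : Fin n) : Fin n → Bool := Function.update a c (!(a c))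

lemma step_exists {n : ℕ} {a b : Fin n → Bool} (h : hammingDist a b = 1) :
    ∃ c, b = flip1 a c := by
  rw [hammingDist, Finset.card_eq_one] at h
  obtain ⟨c, hc⟩ := h
  refine ⟨c, funext fun j => ?_⟩
  by_cases hj : j = c
  · subst hj
    have : a j ≠ b j := by
      have : j ∈ Finset.univ.filter fun i => a i ≠ b i := by rw [hc]; simp
      simpa using this
    cases hb : b j <;> cases ha : a j <;> simp_all [flip1]
  · have : a j = b j := by
      by_contra hne
      have : j ∈ ({c} : Finset (Fin n)) := by rw [← hc]; simp [hne]
      simp_all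
    simp [flip1, Function.update_apply, hj, this.symm]

lemma onesCount_offby {n : ℕ} {a b : Fin n → Bool} {c : Fin n}
    (h : ∀ j, j ≠ c → a j = b j) :
    onesCount a + (if b c = true then 1 else 0) = onesCount b + (if a c = true then 1 else 0) := by
  unfold onesCount
  rw [Finset.card_filter, Finset.card_filter,
    ← Finset.add_sum_erase _ _ (Finset.mem_univ c),
    ← Finset.add_sum_erase _ _ (Finset.mem_univ c)]
  have he : (∑ j ∈ Finset.univ.erase c, if a j = true then 1 else 0)
       = ∑ j ∈ Finset.univ.erase c, if b j = true then 1 else 0 := by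
    refine Finset.sum_congr rfl fun j hj => ?_
    rw [h j (Finset.ne_of_mem_erase hj)]
  omega

/-- Level structure of one flip inside a layer. -/
lemma level_step {n k : ℕ} {a : Fin n → Bool} {c : Fin n}
    (ha : a ∈ layerSet n k) (hb : flip1 a c ∈ layerSet n k) :
    (a c = true ∧ onesCount a = k + 1 ∧ onesCount (flip1 a c) = k) ∨
    (a c = false ∧ onesCount a = k ∧ onesCount (flip1 a c) = k + 1) := by
  have hoff := onesCount_offby (a := a) (b := flip1 a c) (c := c)
    (fun j hj => by simp [flip1, Function.update_apply, hj])
  have hco : (flip1 a c) c = !(a c) := by simp [flip1]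
  rw [hco] at hoff
  cases hac : a c
  · right
    rw [hac] at hoff
    norm_num at hoff
    exact ⟨rfl, by obtain ha|ha := ha <;> obtain hb|hb := hb <;> omega⟩
  · left
    rw [hac] at hoff
    norm_num at hoff
    exact ⟨rfl, by obtain ha|ha := ha <;> obtain hb|hb := hb <;> omega⟩

lemma flip1_flip1 {n : ℕ} (a : Fin n → Bool) (c : Fin n) :
    flip1 (flip1 a c) c = a := by
  funext j
  by_cases hj : j = c <;> simp [flip1, Function.update_apply, hj]

lemma flip1_apply_ne {n : ℕ} (a : Fin n → Bool) {c j : Fin n} (h : j ≠ c) :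
    flip1 a c j = a j := by simp [flip1, Function.update_apply, h]

lemma flip1_apply_self {n : ℕ} (a : Fin n → Bool) (c : Fin n) :
    flip1 a c c = !(a c) := by simp [flip1]

/-- Alternation: the value flipped by the next edge is opposite. -/
lemma alt_step {n k : ℕ} {a : Fin n → Bool} {c c' : Fin n}
    (ha : a ∈ layerSet n k) (hb : flip1 a c ∈ layerSet n k)
    (hd : flip1 (flip1 a c) c' ∈ layerSet n k) :
    flip1 a c c' = !(a c) := by
  obtain ⟨h1, h2, h3⟩ | ⟨h1, h2, h3⟩ := level_step ha hb <;>
    obtain ⟨g1, g2, g3⟩ | ⟨g1, g2, g3⟩ := level_step hb hd <;>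
    simp_all

/-- Coordinates flipped two steps apart are distinct. -/
lemma skip_ne {n k : ℕ} {a : Fin n → Bool} {c0 c1 c2 : Fin n}
    (h0 : a ∈ layerSet n k) (h1 : flip1 a c0 ∈ layerSet n k)
    (h2 : flip1 (flip1 a c0) c1 ∈ layerSet n k)
    (h3 : flip1 (flip1 (flip1 a c0) c1) c2 ∈ layerSet n k)
    (h01 : c0 ≠ c1) : c0 ≠ c2 := by
  intro heq
  subst heq
  have e1 : flip1 a c0 c1 = !(a c0) := alt_step h0 h1 h2
  have e2 : flip1 (flip1 a c0) c1 c0 = !(flip1 a c0 c1) := alt_step h1 h2 h3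
  rw [e1, flip1_apply_ne (flip1 a c0) h01, flip1_apply_self] at e2
  simp at e2

lemma dist_four {n : ℕ} (a : Fin n → Bool) {c0 c1 c2 c3 : Fin n}
    (h01 : c0 ≠ c1) (h02 : c0 ≠ c2) (h03 : c0 ≠ c3)
    (h12 : c1 ≠ c2) (h13 : c1 ≠ c3) (h23 : c2 ≠ c3) :
    hammingDist a (flip1 (flip1 (flip1 (flip1 a c0) c1) c2) c3) = 4 := by
  rw [hammingDist]
  have hset : (Finset.univ.filter fun j =>
      a j ≠ flip1 (flip1 (flip1 (flip1 a c0) c1) c2) c3 j) = {c0, c1, c2, c3} := by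
    ext j
    simp only [Finset.mem_filter, Finset.mem_univ, true_and, Finset.mem_insert,
      Finset.mem_singleton]
    by_cases j0 : j = c0
    · subst j0
      rw [flip1_apply_ne _ h03, flip1_apply_ne _ h02, flip1_apply_ne _ h01, flip1_apply_self]
      simp
    · by_cases j1 : j = c1
      · subst j1
        rw [flip1_apply_ne _ h13, flip1_apply_ne _ h12, flip1_apply_self,
          flip1_apply_ne _ (Ne.symm h01)]
        simp
      · by_cases j2 : j = c2
        · subst j2
          rw [flip1_apply_ne _ h23, flip1_apply_self, flip1_apply_ne _ (Ne.symm h12),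
            flip1_apply_ne _ (Ne.symm h02)]
          simp
        · by_cases j3 : j = c3
          · subst j3
            rw [flip1_apply_self, flip1_apply_ne _ (Ne.symm h23),
              flip1_apply_ne _ (Ne.symm h13), flip1_apply_ne _ (Ne.symm h03)]
            simp
          · rw [flip1_apply_ne _ j3, flip1_apply_ne _ j2, flip1_apply_ne _ j1,
              flip1_apply_ne _ j0]
            simp [j0, j1, j2, j3]
  rw [hset]
  rw [Finset.card_insert_of_notMem (by simp [h01, h02, h03]),
    Finset.card_insert_of_notMem (by simp [h12, h13]),
    Finset.card_insert_of_notMem (by simp [h23]), Finset.card_singleton]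

lemma return_eq {n : ℕ} (a : Fin n → Bool) {c0 c1 c2 : Fin n}
    (h01 : c0 ≠ c1) (h02 : c0 ≠ c2) (h12 : c1 ≠ c2) :
    flip1 (flip1 (flip1 (flip1 (flip1 (flip1 a c0) c1) c2) c0) c1) c2 = a := by
  funext j
  by_cases j0 : j = c0
  · subst j0
    rw [flip1_apply_ne _ h02, flip1_apply_ne _ h01, flip1_apply_self,
      flip1_apply_ne _ h02, flip1_apply_ne _ h01, flip1_apply_self]
    simp
  · by_cases j1 : j = c1
    · subst j1
      rw [flip1_apply_ne _ h12, flip1_apply_self, flip1_apply_ne _ (Ne.symm h01),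
        flip1_apply_ne _ h12, flip1_apply_self, flip1_apply_ne _ (Ne.symm h01)]
      simp
    · by_cases j2 : j = c2
      · subst j2
        rw [flip1_apply_self, flip1_apply_ne _ (Ne.symm h12), flip1_apply_ne _ (Ne.symm h02),
          flip1_apply_self, flip1_apply_ne _ (Ne.symm h12), flip1_apply_ne _ (Ne.symm h02)]
        simp
      · rw [flip1_apply_ne _ j2, flip1_apply_ne _ j1, flip1_apply_ne _ j0,
          flip1_apply_ne _ j2, flip1_apply_ne _ j1, flip1_apply_ne _ j0]

/-- The set of pairs `{v0,v4}, {v1,v5}, {v2,v6}` of the path `P6`. -/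
def P6pairs : Set (Sym2 (Fin 7)) := {s((0 : Fin 7), (4 : Fin 7)), s(1, 5), s(2, 6)}

/-- `(P6, P)` is `2`-distance-separating. -/
theorem p6_distSeparating : DistSeparating (SimpleGraph.pathGraph 7) P6pairs 2 := by
  constructor
  · -- the explicit embedding into `Q_3`
    refine ⟨3, f7, ⟨by decide, ?_⟩, ?_⟩
    · intro u v h
      rw [pathGraph_adj] at h
      show hammingDist (f7 u) (f7 v) = 1
      fin_cases u <;> fin_cases v <;> simp_all <;> decide
    · intro x y hxy
      simp only [P6pairs, Set.mem_insert_iff, Set.mem_singleton_iff, Sym2.eq, Sym2.rel_iff',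
        Prod.mk.injEq, Prod.swap_prod_mk] at hxy
      rcases hxy with (⟨rfl, rfl⟩ | ⟨rfl, rfl⟩) | (⟨rfl, rfl⟩ | ⟨rfl, rfl⟩) |
        (⟨rfl, rfl⟩ | ⟨rfl, rfl⟩) <;> decide
  · -- no embedding into a layer keeps all three pairs at distance 2
    intro n k g hg
    obtain ⟨hinj, hadj⟩ := hg
    set a : Fin 7 → (Fin n → Bool) := fun i => (g i).1 with hadef
    have hainj : Function.Injective a := fun i j h => hinj (Subtype.ext h)
    have hmem : ∀ i : Fin 7, a i ∈ layerSet n k := fun i => (g i).2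
    have hstep : ∀ u v : Fin 7, (pathGraph 7).Adj u v → hammingDist (a u) (a v) = 1 := by
      intro u v h
      have := hadj u v h
      simpa [layer, cube, comap_adj] using this
    obtain ⟨c0, e0⟩ := step_exists (hstep 0 1 (by rw [pathGraph_adj]; decide))
    obtain ⟨c1, e1⟩ := step_exists (hstep 1 2 (by rw [pathGraph_adj]; decide))
    obtain ⟨c2, e2⟩ := step_exists (hstep 2 3 (by rw [pathGraph_adj]; decide))
    obtain ⟨c3, e3⟩ := step_exists (hstep 3 4 (by rw [pathGraph_adj]; decide))
    obtain ⟨c4, e4⟩ := step_exists (hstep 4 5 (by rw [pathGraph_adj]; decide))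
    obtain ⟨c5, e5⟩ := step_exists (hstep 5 6 (by rw [pathGraph_adj]; decide))
    -- memberships in flipped form
    have M0 := hmem 0
    have M1 : flip1 (a 0) c0 ∈ layerSet n k := e0 ▸ hmem 1
    have M2 : flip1 (flip1 (a 0) c0) c1 ∈ layerSet n k := by
      have := hmem 2; rwa [e1, e0] at this
    have M3 : flip1 (flip1 (flip1 (a 0) c0) c1) c2 ∈ layerSet n k := by
      have := hmem 3; rwa [e2, e1, e0] at this
    have M4 : flip1 (flip1 (flip1 (flip1 (a 0) c0) c1) c2) c3 ∈ layerSet n k := by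
      have := hmem 4; rwa [e3, e2, e1, e0] at this
    have M5 : flip1 (flip1 (flip1 (flip1 (flip1 (a 0) c0) c1) c2) c3) c4 ∈ layerSet n k := by
      have := hmem 5; rwa [e4, e3, e2, e1, e0] at this
    have M6 : flip1 (flip1 (flip1 (flip1 (flip1 (flip1 (a 0) c0) c1) c2) c3) c4) c5
        ∈ layerSet n k := by
      have := hmem 6; rwa [e5, e4, e3, e2, e1, e0] at this
    -- consecutive flip coordinates are distinct
    have adj_ne : ∀ (i j : Fin 7) (c : Fin n), i ≠ j →
        a j = flip1 (flip1 (a i) c) c → False := by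
      intro i j c hij h
      rw [flip1_flip1] at h
      exact hij (hainj h).symm
    have h01 : c0 ≠ c1 := fun h => adj_ne 0 2 c0 (by decide)
      (by rw [e1, e0, h])
    have h12 : c1 ≠ c2 := fun h => adj_ne 1 3 c1 (by decide)
      (by rw [e2, e1, h])
    have h23 : c2 ≠ c3 := fun h => adj_ne 2 4 c2 (by decide)
      (by rw [e3, e2, h])
    have h34 : c3 ≠ c4 := fun h => adj_ne 3 5 c3 (by decide)
      (by rw [e4, e3, h])
    have h45 : c4 ≠ c5 := fun h => adj_ne 4 6 c4 (by decide)
      (by rw [e5, e4, h])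
    -- coordinates two apart are distinct
    have s02 : c0 ≠ c2 := skip_ne M0 M1 M2 M3 h01
    have s13 : c1 ≠ c3 := skip_ne M1 M2 M3 M4 h12
    have s24 : c2 ≠ c4 := skip_ne M2 M3 M4 M5 h23
    have s35 : c3 ≠ c5 := skip_ne M3 M4 M5 M6 h34
    by_cases h03 : c0 = c3
    · by_cases h14 : c1 = c4
      · by_cases h25 : c2 = c5
        · -- all three pairs at distance 2 would force `a 6 = a 0`
          exfalso
          have E6 : a 6 = flip1 (flip1 (flip1 (flip1 (flip1 (flip1 (a 0) c0) c1) c2) c0) c1) c2 := by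
            rw [e5, e4, e3, e2, e1, e0, ← h03, ← h14, ← h25]
          rw [return_eq (a 0) h01 s02 h12] at E6
          exact absurd (hainj E6) (by decide)
        · -- the pair {2, 6} is at distance 4
          refine ⟨2, 6, by simp [P6pairs], ?_⟩
          have E : a 6 = flip1 (flip1 (flip1 (flip1 (a 2) c2) c3) c4) c5 := by
            rw [e5, e4, e3, e2]
          show hammingDist (a 2) (a 6) = 4
          rw [E]
          exact dist_four (a 2) h23 s24 h25 h34 s35 h45
      · -- the pair {1, 5} is at distance 4
        refine ⟨1, 5, by simp [P6pairs], ?_⟩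
        have E : a 5 = flip1 (flip1 (flip1 (flip1 (a 1) c1) c2) c3) c4 := by
          rw [e4, e3, e2, e1]
        show hammingDist (a 1) (a 5) = 4
        rw [E]
        exact dist_four (a 1) h12 s13 h14 h23 s24 h34
    · -- the pair {0, 4} is at distance 4
      refine ⟨0, 4, by simp [P6pairs], ?_⟩
      have E : a 4 = flip1 (flip1 (flip1 (flip1 (a 0) c0) c1) c2) c3 := by
        rw [e3, e2, e1, e0]
      show hammingDist (a 0) (a 4) = 4
      rw [E]
      exact dist_four (a 0) h01 s02 h03 h12 s13 h23
end

section
/- Let T be the tree on 9 vertices consisting of the path v0, v1, ..., v7 together with one further vertex v8 adjacent to v2, and let P = {{v0,v4}, {v0,v6}, {v3,v7}, {v5,v8}}. Then (T, P) is 2-distance-separating. Moreover there exists an embedding f of T into Q_4 such that: (i) d(f(x), f(y)) = 2 for all pairs {x,y} ∈ P; (ii) for every pair {x,y} ∈ P, each direction occurs on at most two edges of the path in f(T) from f(x) to f(y); and (iii) f(T) is an induced subgraph of Q_4. -/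
open SimpleGraph

/-- The tree on 9 vertices: the path `v0 v1 ... v7` together with `v8` adjacent to `v2`. -/
def treeT : SimpleGraph (Fin 9) :=
  SimpleGraph.fromEdgeSet
    {s((0 : Fin 9), (1 : Fin 9)), s(1, 2), s(2, 3), s(3, 4), s(4, 5), s(5, 6), s(6, 7), s(2, 8)}

/-- The set of pairs `{v0,v4}, {v0,v6}, {v3,v7}, {v5,v8}`. -/
def Tpairs : Set (Sym2 (Fin 9)) :=
  {s((0 : Fin 9), (4 : Fin 9)), s(0, 6), s(3, 7), s(5, 8)}

/-- `edgeUsesDir f i e` holds when the images under `f` of the endpoints of `e` differ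
in coordinate `i`, i.e. the edge `f(e)` uses direction `i`. -/
def edgeUsesDir {V : Type*} {n : ℕ} (f : V → (Fin n → Bool)) (i : Fin n) : Sym2 V → Bool :=
  Sym2.lift ⟨fun u v => decide (f u i ≠ f v i), by intro u v; simp [ne_comm]⟩

open scoped symmDiff

namespace TreeTProof

variable {n : ℕ}

def Dset (x y : Fin n → Bool) : Finset (Fin n) := Finset.univ.filter fun i => x i ≠ y i

lemma hd_eq (x y : Fin n → Bool) : hammingDist x y = (Dset x y).card := rfl

lemma Dset_comm (x y : Fin n → Bool) : Dset x y = Dset y x := by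
  simp [Dset, ne_comm]

lemma Dset_trans (x y z : Fin n → Bool) : Dset x z = Dset x y ∆ Dset y z := by
  ext i
  simp only [Dset, Finset.mem_symmDiff, Finset.mem_filter, Finset.mem_univ, true_and]
  cases hx : x i <;> cases hy : y i <;> cases hz : z i <;> simp

lemma Dset_update (x : Fin n → Bool) (i : Fin n) :
    Dset x (Function.update x i (!x i)) = {i} := by
  ext j
  by_cases h : j = i
  · subst h; simp [Dset, Function.update_apply]
  · simp [Dset, Function.update_apply, h]

lemma eq_of_Dset (x y : Fin n → Bool) (h : Dset x y = ∅) : x = y := by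
  funext i
  have := Finset.ext_iff.mp h i
  simp only [Dset, Finset.mem_filter, Finset.mem_univ, true_and, Finset.notMem_empty,
    iff_false] at this
  exact not_ne_iff.mp this

lemma eq_update_of_hd_one {x y : Fin n → Bool} (h : hammingDist x y = 1) :
    ∃ i, y = Function.update x i (!x i) := by
  rw [hd_eq] at h
  obtain ⟨i, hi⟩ := Finset.card_eq_one.mp h
  refine ⟨i, funext fun j => ?_⟩
  by_cases hj : j = i
  · subst hj
    have : j ∈ Dset x y := hi ▸ Finset.mem_singleton_self j
    simp only [Dset, Finset.mem_filter, Finset.mem_univ, true_and] at this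
    rw [Function.update_self]
    cases hx : x j <;> cases hy : y j <;> simp_all
  · have : j ∉ Dset x y := by rw [hi]; simp [hj]
    simp only [Dset, Finset.mem_filter, Finset.mem_univ, true_and, not_ne_iff] at this
    rw [Function.update_of_ne hj]
    exact this.symm

lemma sd2 {α : Type*} [DecidableEq α] {a b : α} (hab : a ≠ b) :
    ({a} : Finset α) ∆ {b} = {a, b} := by
  ext i
  by_cases h1 : i = a <;> by_cases h2 : i = b <;> simp_all [Finset.mem_symmDiff]

lemma sd4 {α : Type*} [DecidableEq α] {a b c d : α} (hab : a ≠ b) (hac : a ≠ c) (had : a ≠ d)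
    (hbc : b ≠ c) (hbd : b ≠ d) (hcd : c ≠ d) :
    (({a} : Finset α) ∆ {b}) ∆ {c} ∆ {d} = {a, b, c, d} := by
  ext i
  by_cases h1 : i = a <;> by_cases h2 : i = b <;> by_cases h3 : i = c <;> by_cases h4 : i = d <;>
    simp_all [Finset.mem_symmDiff]

lemma card4 {α : Type*} [DecidableEq α] {a b c d : α} (hab : a ≠ b) (hac : a ≠ c) (had : a ≠ d)
    (hbc : b ≠ c) (hbd : b ≠ d) (hcd : c ≠ d) : ({a, b, c, d} : Finset α).card = 4 := by
  rw [Finset.card_insert_of_notMem (by simp [hab, hac, had]),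
    Finset.card_insert_of_notMem (by simp [hbc, hbd]),
    Finset.card_insert_of_notMem (by simp [hcd]), Finset.card_singleton]

lemma sd6 {α : Type*} [DecidableEq α] {a b c e f : α} (hab : a ≠ b) (hac : a ≠ c) (hae : a ≠ e)
    (haf : a ≠ f) (hbc : b ≠ c) (hbe : b ≠ e) (hbf : b ≠ f) (hce : c ≠ e) (hcf : c ≠ f)
    (hef : e ≠ f) :
    ({a} : Finset α) ∆ {b} ∆ {c} ∆ {a} ∆ {e} ∆ {f} = {b, c, e, f} := by
  ext i
  simp only [Finset.mem_symmDiff, Finset.mem_singleton, Finset.mem_insert]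
  by_cases g1 : i = a <;> by_cases g2 : i = b <;> by_cases g3 : i = c <;>
    by_cases g5 : i = e <;> by_cases g6 : i = f <;> simp_all

lemma sd_final {α : Type*} [DecidableEq α] (a b c e : α) :
    (({a} : Finset α) ∆ {b} ∆ {c} ∆ {a} ∆ {e} ∆ {c} ∆ {a}) ∆ ({a} ∆ {b} ∆ {e}) = ∅ := by
  ext i
  simp only [Finset.mem_symmDiff, Finset.mem_singleton, Finset.notMem_empty, iff_false]
  by_cases g1 : i = a <;> by_cases g2 : i = b <;> by_cases g3 : i = c <;>
    by_cases g5 : i = e <;> simp_all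

lemma core {n : ℕ} (x0 x1 x2 x3 x4 x5 x6 x7 x8 : Fin n → Bool)
    (a1 a2 a3 a4 a5 a6 a7 a8 : Fin n) (b : Bool)
    (h1 : x1 = Function.update x0 a1 (!x0 a1))
    (h2 : x2 = Function.update x1 a2 (!x1 a2))
    (h3 : x3 = Function.update x2 a3 (!x2 a3))
    (h4 : x4 = Function.update x3 a4 (!x3 a4))
    (h5 : x5 = Function.update x4 a5 (!x4 a5))
    (h6 : x6 = Function.update x5 a6 (!x5 a6))
    (h7 : x7 = Function.update x6 a7 (!x6 a7))
    (h8 : x8 = Function.update x2 a8 (!x2 a8))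
    (hb1 : x0 a1 = b) (hb2 : x1 a2 = !b) (hb3 : x2 a3 = b) (hb4 : x3 a4 = !b)
    (hb5 : x4 a5 = b) (hb6 : x5 a6 = !b) (hb7 : x6 a7 = b) (hb8 : x2 a8 = b)
    (i02 : x0 ≠ x2) (i13 : x1 ≠ x3) (i24 : x2 ≠ x4) (i35 : x3 ≠ x5) (i46 : x4 ≠ x6)
    (i57 : x5 ≠ x7) (i38 : x3 ≠ x8) (i18 : x1 ≠ x8) (i78 : x7 ≠ x8)
    (d04 : hammingDist x0 x4 ≠ 4) (d06 : hammingDist x0 x6 ≠ 4)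
    (d37 : hammingDist x3 x7 ≠ 4) (d58 : hammingDist x5 x8 ≠ 4) : False := by
  rw [hd_eq] at d04 d06 d37 d58
  have D01 : Dset x0 x1 = {a1} := by rw [h1, Dset_update]
  have D12 : Dset x1 x2 = {a2} := by rw [h2, Dset_update]
  have D23 : Dset x2 x3 = {a3} := by rw [h3, Dset_update]
  have D34 : Dset x3 x4 = {a4} := by rw [h4, Dset_update]
  have D45 : Dset x4 x5 = {a5} := by rw [h5, Dset_update]
  have D56 : Dset x5 x6 = {a6} := by rw [h6, Dset_update]
  have D67 : Dset x6 x7 = {a7} := by rw [h7, Dset_update]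
  have D28 : Dset x2 x8 = {a8} := by rw [h8, Dset_update]
  -- adjacent-pair distinctness from injectivity
  have ne12 : a1 ≠ a2 := by
    intro h
    exact i02 (eq_of_Dset _ _ (by rw [Dset_trans x0 x1 x2, D01, D12, h, symmDiff_self]; rfl))
  have ne23 : a2 ≠ a3 := by
    intro h
    exact i13 (eq_of_Dset _ _ (by rw [Dset_trans x1 x2 x3, D12, D23, h, symmDiff_self]; rfl))
  have ne34 : a3 ≠ a4 := by
    intro h
    exact i24 (eq_of_Dset _ _ (by rw [Dset_trans x2 x3 x4, D23, D34, h, symmDiff_self]; rfl))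
  have ne45 : a4 ≠ a5 := by
    intro h
    exact i35 (eq_of_Dset _ _ (by rw [Dset_trans x3 x4 x5, D34, D45, h, symmDiff_self]; rfl))
  have ne56 : a5 ≠ a6 := by
    intro h
    exact i46 (eq_of_Dset _ _ (by rw [Dset_trans x4 x5 x6, D45, D56, h, symmDiff_self]; rfl))
  have ne67 : a6 ≠ a7 := by
    intro h
    exact i57 (eq_of_Dset _ _ (by rw [Dset_trans x5 x6 x7, D56, D67, h, symmDiff_self]; rfl))
  have ne83 : a8 ≠ a3 := by
    intro h
    exact i38 (eq_of_Dset _ _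
      (by rw [Dset_trans x3 x2 x8, Dset_comm x3 x2, D23, D28, h, symmDiff_self]; rfl))
  -- bit-parity distinctness
  have ne13 : a1 ≠ a3 := by
    intro h; subst h
    simp [h2, h1, Function.update_apply, ne12, hb1] at hb3
  have ne24 : a2 ≠ a4 := by
    intro h; subst h
    simp [h3, h2, Function.update_apply, ne23, hb2] at hb4
  -- step 1 : a1 = a4
  by_cases h14 : a1 = a4
  case neg =>
    exact d04 (by
      rw [Dset_trans x0 x3 x4, Dset_trans x0 x2 x3, Dset_trans x0 x1 x2, D01, D12, D23, D34,
        sd4 ne12 ne13 h14 ne23 ne24 ne34]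
      exact card4 ne12 ne13 h14 ne23 ne24 ne34)
  rw [← h14] at D34
  -- step 2 : a4 = a7, i.e. a1 = a7
  have ne46 : a4 ≠ a6 := by
    intro h; subst h
    simp [h5, h4, Function.update_apply, ne45, hb4] at hb6
  have ne57 : a5 ≠ a7 := by
    intro h; subst h
    simp [h6, h5, Function.update_apply, ne56, hb5] at hb7
  have ne15 : a1 ≠ a5 := fun h => ne45 (h14.symm.trans h)
  have ne16 : a1 ≠ a6 := fun h => ne46 (h14.symm.trans h)
  by_cases h17 : a1 = a7
  case neg =>
    have h47 : a4 ≠ a7 := fun h => h17 (h14.trans h)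
    exact d37 (by
      rw [Dset_trans x3 x6 x7, Dset_trans x3 x5 x6, Dset_trans x3 x4 x5, D34, D45, D56, D67,
        sd4 ne15 ne16 h17 ne56 ne57 ne67]
      exact card4 ne15 ne16 h17 ne56 ne57 ne67)
  rw [← h17] at D67
  -- step 3 : a8 = a5
  have ne35 : a3 ≠ a5 := by
    intro h; subst h
    simp [h4, h3, Function.update_apply, ne34, hb3] at hb5
  have ne84 : a8 ≠ a1 := by
    intro h; subst h
    simp [h2, h1, Function.update_apply, ne12, hb1] at hb8
  by_cases h85 : a8 = a5
  case neg =>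
    exact d58 (by
      rw [Dset_trans x5 x2 x8, Dset_comm x5 x2, Dset_trans x2 x4 x5, Dset_trans x2 x3 x4,
        D23, D34, D45, D28]
      have e1 : a3 ≠ a1 := fun h => ne13 h.symm
      have e2 : a5 ≠ a8 := fun h => h85 h.symm
      have e3 : a3 ≠ a8 := fun h => ne83 h.symm
      have e4 : a1 ≠ a8 := fun h => ne84 h.symm
      rw [sd4 e1 ne35 e3 ne15 e4 e2]
      exact card4 e1 ne35 e3 ne15 e4 e2)
  rw [h85] at D28
  -- step 4 : a2 ≠ a5
  have ne25 : a2 ≠ a5 := by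
    intro h
    exact i18 (eq_of_Dset _ _ (by
      rw [Dset_trans x1 x2 x8, D12, D28, h, symmDiff_self]; rfl))
  -- step 5 : a2 ≠ a6
  have ne26 : a2 ≠ a6 := by
    intro h; subst h
    simp [h5, h4, h3, h2, Function.update_apply, ne23, ne24, ne25, hb2] at hb6
  -- step 6 : a3 = a6
  by_cases h36 : a3 = a6
  case neg =>
    exact d06 (by
      rw [Dset_trans x0 x5 x6, Dset_trans x0 x4 x5, Dset_trans x0 x3 x4, Dset_trans x0 x2 x3,
        Dset_trans x0 x1 x2, D01, D12, D23, D34, D45, D56]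
      rw [sd6 ne12 ne13 ne15 ne16 ne23 ne25 ne26 ne35 h36 ne56]
      exact card4 ne23 ne25 ne26 ne35 h36 ne56)
  rw [← h36] at D56
  -- final contradiction : x7 = x8
  apply i78
  apply eq_of_Dset
  rw [Dset_trans x7 x0 x8, Dset_comm x7 x0, Dset_trans x0 x6 x7, Dset_trans x0 x5 x6,
    Dset_trans x0 x4 x5, Dset_trans x0 x3 x4, Dset_trans x0 x2 x3, Dset_trans x0 x1 x2,
    Dset_trans x0 x2 x8, Dset_trans x0 x1 x2, D01, D12, D23, D34, D45, D56, D67, D28]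
  exact sd_final a1 a2 a3 a5


/-! ### Auxiliary facts about `treeT` -/

lemma treeT_adj_iff (u v : Fin 9) : treeT.Adj u v ↔
    (s(u,v) = s((0:Fin 9),(1:Fin 9)) ∨ s(u,v) = s(1,2) ∨ s(u,v) = s(2,3) ∨ s(u,v) = s(3,4) ∨
     s(u,v) = s(4,5) ∨ s(u,v) = s(5,6) ∨ s(u,v) = s(6,7) ∨ s(u,v) = s(2,8)) ∧ u ≠ v := by
  simp [treeT, SimpleGraph.fromEdgeSet_adj, Set.mem_insert_iff]

def fF : Fin 9 → (Fin 4 → Bool) :=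
  ![![false,false,false,false], ![true,false,false,false], ![true,true,false,false],
    ![true,true,true,false], ![false,true,true,false], ![false,true,true,true],
    ![false,false,true,true], ![true,false,true,true], ![true,true,false,true]]

lemma hiff : ∀ u v : Fin 9, treeT.Adj u v ↔ (cube 4).Adj (fF u) (fF v) := by
  simp only [treeT_adj_iff, cube]
  decide

lemma hemb : IsEmbedding treeT (cube 4) fF :=
  ⟨by decide, fun u v h => (hiff u v).mp h⟩

lemma hdist : ∀ x y : Fin 9, s(x, y) ∈ Tpairs → hammingDist (fF x) (fF y) = 2 := by
  intro x y hxy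
  simp only [Tpairs, Set.mem_insert_iff, Set.mem_singleton_iff] at hxy
  rcases hxy with h|h|h|h <;> rw [Sym2.eq_iff] at h <;>
    rcases h with ⟨rfl, rfl⟩|⟨rfl, rfl⟩ <;> decide

def Sfin : Finset (Sym2 (Fin 9)) :=
  {s(0,1), s(1,2), s(2,3), s(3,4), s(4,5), s(5,6), s(6,7), s(2,8)}

lemma memS : ∀ e ∈ treeT.edgeSet, e ∈ Sfin := by
  intro e he
  rw [treeT, SimpleGraph.edgeSet_fromEdgeSet] at he
  obtain ⟨h1, -⟩ := he
  simp only [Set.mem_insert_iff, Set.mem_singleton_iff] at h1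
  simp only [Sfin, Finset.mem_insert, Finset.mem_singleton]
  tauto

lemma countP_le_card {α : Type*} [DecidableEq α] (l : List α) (hl : l.Nodup) (s : Finset α)
    (h : ∀ e ∈ l, e ∈ s) (p : α → Bool) : l.countP p ≤ (s.filter (fun a => p a)).card := by
  rw [List.countP_eq_length_filter]
  have hnd : (l.filter p).Nodup := hl.filter p
  calc (l.filter p).length = (l.filter p).toFinset.card := (List.toFinset_card_of_nodup hnd).symm
    _ ≤ (s.filter (fun a => p a)).card := by
        apply Finset.card_le_card
        intro a ha
        rw [List.mem_toFinset, List.mem_filter] at ha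
        exact Finset.mem_filter.2 ⟨h a ha.1, ha.2⟩

lemma interior_two_nbrs {V : Type*} {G : SimpleGraph V} {x y v : V} (w : G.Walk x y)
    (hw : w.IsPath) (hv : v ∈ w.support) (hx : v ≠ x) (hy : v ≠ y) :
    ∃ u1 u2, u1 ≠ u2 ∧ G.Adj v u1 ∧ G.Adj v u2 := by
  induction w with
  | nil => simp at hv; exact absurd hv hx
  | @cons a b c hab p ih =>
    rw [SimpleGraph.Walk.support_cons, List.mem_cons] at hv
    rcases hv with rfl | hv
    · exact absurd rfl hx
    · rw [SimpleGraph.Walk.cons_isPath_iff] at hw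
      by_cases hvb : v = b
      · subst hvb
        cases p with
        | nil => exact absurd rfl hy
        | @cons b c' c hbc q =>
          refine ⟨a, c', fun h => ?_, hab.symm, hbc⟩
          apply hw.2
          rw [h, SimpleGraph.Walk.support_cons]
          exact List.mem_cons.2 (Or.inr q.start_mem_support)
      · exact ih hw.1 hv hvb hy

lemma adj7 : ∀ u, treeT.Adj 7 u → u = 6 := by
  simp only [treeT_adj_iff]; decide

lemma adj0 : ∀ u, treeT.Adj 0 u → u = 1 := by
  simp only [treeT_adj_iff]; decide

lemma no_edge_of_pendant {x y : Fin 9} (va vb : Fin 9) (hx : va ≠ x) (hy : va ≠ y)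
    (honly : ∀ u, treeT.Adj va u → u = vb) (w : treeT.Walk x y) (hw : w.IsPath) :
    s(vb, va) ∉ w.edges := by
  intro h
  have hs : va ∈ w.support := SimpleGraph.Walk.snd_mem_support_of_mem_edges w h
  obtain ⟨u1, u2, h12, ha1, ha2⟩ := interior_two_nbrs w hw hs hx hy
  exact h12 ((honly _ ha1).trans (honly _ ha2).symm)

lemma count_bound {x y : Fin 9} (w : treeT.Walk x y) (hw : w.IsPath) (i : Fin 4)
    (va vb : Fin 9) (hx : va ≠ x) (hy : va ≠ y) (honly : ∀ u, treeT.Adj va u → u = vb) :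
    w.edges.countP (edgeUsesDir fF i) ≤
      ((Sfin.erase s(vb, va)).filter fun e => edgeUsesDir fF i e).card := by
  apply countP_le_card _ hw.isTrail.edges_nodup
  intro e he
  rw [Finset.mem_erase]
  exact ⟨fun hh => no_edge_of_pendant va vb hx hy honly w hw (hh ▸ he),
    memS e (w.edges_subset_edgeSet he)⟩

lemma count_global {x y : Fin 9} (w : treeT.Walk x y) (hw : w.IsPath) (i : Fin 4) :
    w.edges.countP (edgeUsesDir fF i) ≤ (Sfin.filter fun e => edgeUsesDir fF i e).card :=
  countP_le_card _ hw.isTrail.edges_nodup Sfin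
    (fun e he => memS e (w.edges_subset_edgeSet he)) _

lemma hcount : ∀ x y : Fin 9, s(x, y) ∈ Tpairs → ∀ w : treeT.Walk x y, w.IsPath →
    ∀ i : Fin 4, w.edges.countP (edgeUsesDir fF i) ≤ 2 := by
  intro x y hxy w hw i
  fin_cases i
  · -- direction 0
    simp only [Tpairs, Set.mem_insert_iff, Set.mem_singleton_iff] at hxy
    rcases hxy with h|h|h|h <;> rw [Sym2.eq_iff] at h <;>
      rcases h with ⟨rfl, rfl⟩|⟨rfl, rfl⟩ <;>
      first
        | exact le_trans (count_bound w hw 0 7 6 (by decide) (by decide) adj7) (by decide)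
        | exact le_trans (count_bound w hw 0 0 1 (by decide) (by decide) adj0) (by decide)
  · exact le_trans (count_global w hw 1) (by decide)
  · exact le_trans (count_global w hw 2) (by decide)
  · exact le_trans (count_global w hw 3) (by decide)

/-! ### Layer part -/

lemma onesCount_flip_false {n : ℕ} {x : Fin n → Bool} {i : Fin n} (h : x i = false) :
    onesCount (Function.update x i (!x i)) = onesCount x + 1 := by
  unfold onesCount
  have heq : (Finset.univ.filter fun j => Function.update x i (!x i) j = true) =
      insert i (Finset.univ.filter fun j => x j = true) := by
    ext j
    by_cases hj : j = i
    · subst hj; simp [Function.update_self, h]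
    · simp [Function.update_of_ne hj, hj]
  rw [heq, Finset.card_insert_of_notMem (by simp [h])]

lemma onesCount_flip_true {n : ℕ} {x : Fin n → Bool} {i : Fin n} (h : x i = true) :
    onesCount x = onesCount (Function.update x i (!x i)) + 1 := by
  unfold onesCount
  have heq : (Finset.univ.filter fun j => x j = true) =
      insert i (Finset.univ.filter fun j => Function.update x i (!x i) j = true) := by
    ext j
    by_cases hj : j = i
    · subst hj; simp [h]
    · simp [Function.update_of_ne hj, hj]
  rw [heq, Finset.card_insert_of_notMem (by simp [Function.update_self, h])]

lemma edge_bits {n k : ℕ} {x y : Fin n → Bool} {i : Fin n}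
    (hy : y = Function.update x i (!x i))
    (hx : onesCount x = k ∨ onesCount x = k + 1)
    (hyl : onesCount y = k ∨ onesCount y = k + 1) :
    (x i = false ∧ onesCount x = k ∧ onesCount y = k + 1) ∨
    (x i = true ∧ onesCount x = k + 1 ∧ onesCount y = k) := by
  by_cases hxi : x i = true
  · have hc := onesCount_flip_true hxi
    rw [← hy] at hc
    right; exact ⟨hxi, by omega, by omega⟩
  · rw [Bool.not_eq_true] at hxi
    have hc := onesCount_flip_false hxi
    rw [← hy] at hc
    left; exact ⟨hxi, by omega, by omega⟩

lemma layered_contra (n k : ℕ) (g : Fin 9 → layerSet n k)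
    (hg : IsEmbedding treeT (layer n k) g) :
    ∃ x y : Fin 9, s(x, y) ∈ Tpairs ∧ hammingDist (g x).1 (g y).1 = 2 + 2 := by
  by_contra hcon
  push_neg at hcon
  have hne : ∀ i j : Fin 9, i ≠ j → (g i).1 ≠ (g j).1 :=
    fun i j hij h => hij (hg.1 (Subtype.ext h))
  have hadj : ∀ u v : Fin 9, treeT.Adj u v → hammingDist (g u).1 (g v).1 = 1 :=
    fun u v h => hg.2 u v h
  obtain ⟨a1, h1⟩ := eq_update_of_hd_one (hadj 0 1 ((treeT_adj_iff 0 1).mpr (by decide)))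
  obtain ⟨a2, h2⟩ := eq_update_of_hd_one (hadj 1 2 ((treeT_adj_iff 1 2).mpr (by decide)))
  obtain ⟨a3, h3⟩ := eq_update_of_hd_one (hadj 2 3 ((treeT_adj_iff 2 3).mpr (by decide)))
  obtain ⟨a4, h4⟩ := eq_update_of_hd_one (hadj 3 4 ((treeT_adj_iff 3 4).mpr (by decide)))
  obtain ⟨a5, h5⟩ := eq_update_of_hd_one (hadj 4 5 ((treeT_adj_iff 4 5).mpr (by decide)))
  obtain ⟨a6, h6⟩ := eq_update_of_hd_one (hadj 5 6 ((treeT_adj_iff 5 6).mpr (by decide)))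
  obtain ⟨a7, h7⟩ := eq_update_of_hd_one (hadj 6 7 ((treeT_adj_iff 6 7).mpr (by decide)))
  obtain ⟨a8, h8⟩ := eq_update_of_hd_one (hadj 2 8 ((treeT_adj_iff 2 8).mpr (by decide)))
  have lev : ∀ j : Fin 9, onesCount (g j).1 = k ∨ onesCount (g j).1 = k + 1 := fun j => (g j).2
  have E1 := edge_bits h1 (lev 0) (lev 1)
  have E2 := edge_bits h2 (lev 1) (lev 2)
  have E3 := edge_bits h3 (lev 2) (lev 3)
  have E4 := edge_bits h4 (lev 3) (lev 4)
  have E5 := edge_bits h5 (lev 4) (lev 5)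
  have E6 := edge_bits h6 (lev 5) (lev 6)
  have E7 := edge_bits h7 (lev 6) (lev 7)
  have E8 := edge_bits h8 (lev 2) (lev 8)
  have m04 : s((0:Fin 9), (4:Fin 9)) ∈ Tpairs := by simp [Tpairs]
  have m06 : s((0:Fin 9), (6:Fin 9)) ∈ Tpairs := by simp [Tpairs]
  have m37 : s((3:Fin 9), (7:Fin 9)) ∈ Tpairs := by simp [Tpairs]
  have m58 : s((5:Fin 9), (8:Fin 9)) ∈ Tpairs := by simp [Tpairs]
  rcases E1 with ⟨hb1, hl0, hl1⟩ | ⟨hb1, hl0, hl1⟩ <;>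
  [rcases E2 with ⟨hb2, hl1', _⟩ | ⟨hb2, _, hl2⟩;
   rcases E2 with ⟨hb2, _, hl2⟩ | ⟨hb2, hl1', _⟩] <;>
  first
  | omega
  | (rcases E3 with ⟨hb3, hl2', hl3⟩ | ⟨hb3, hl2', hl3⟩ <;>
     rcases E4 with ⟨hb4, hl3', hl4⟩ | ⟨hb4, hl3', hl4⟩ <;>
     rcases E5 with ⟨hb5, hl4', hl5⟩ | ⟨hb5, hl4', hl5⟩ <;>
     rcases E6 with ⟨hb6, hl5', hl6⟩ | ⟨hb6, hl5', hl6⟩ <;>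
     rcases E7 with ⟨hb7, hl6', _⟩ | ⟨hb7, hl6', _⟩ <;>
     rcases E8 with ⟨hb8, hl2'', _⟩ | ⟨hb8, hl2'', _⟩ <;>
     first
     | omega
     | (exact core _ _ _ _ _ _ _ _ _ a1 a2 a3 a4 a5 a6 a7 a8 false
          h1 h2 h3 h4 h5 h6 h7 h8 hb1 hb2 hb3 hb4 hb5 hb6 hb7 hb8
          (hne 0 2 (by decide)) (hne 1 3 (by decide)) (hne 2 4 (by decide))
          (hne 3 5 (by decide)) (hne 4 6 (by decide)) (hne 5 7 (by decide))
          (hne 3 8 (by decide)) (hne 1 8 (by decide)) (hne 7 8 (by decide))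
          (hcon 0 4 m04) (hcon 0 6 m06) (hcon 3 7 m37) (hcon 5 8 m58))
     | (exact core _ _ _ _ _ _ _ _ _ a1 a2 a3 a4 a5 a6 a7 a8 true
          h1 h2 h3 h4 h5 h6 h7 h8 hb1 hb2 hb3 hb4 hb5 hb6 hb7 hb8
          (hne 0 2 (by decide)) (hne 1 3 (by decide)) (hne 2 4 (by decide))
          (hne 3 5 (by decide)) (hne 4 6 (by decide)) (hne 5 7 (by decide))
          (hne 3 8 (by decide)) (hne 1 8 (by decide)) (hne 7 8 (by decide))
          (hcon 0 4 m04) (hcon 0 6 m06) (hcon 3 7 m37) (hcon 5 8 m58)))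

end TreeTProof

open TreeTProof in
/-- `(T, P)` is `2`-distance-separating; moreover there is an embedding
`f` of `T` into `Q_4` realising distance `2` on all pairs of `P`, using each direction on
at most two edges of the path between any pair of `P`, with `f(T)` induced in `Q_4`. -/
theorem treeT_distSeparating_induced :
    DistSeparating treeT Tpairs 2 ∧
    ∃ f : Fin 9 → (Fin 4 → Bool), IsEmbedding treeT (cube 4) f ∧
      (∀ x y : Fin 9, s(x, y) ∈ Tpairs → hammingDist (f x) (f y) = 2) ∧
      (∀ x y : Fin 9, s(x, y) ∈ Tpairs → ∀ w : treeT.Walk x y, w.IsPath →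
        ∀ i : Fin 4, w.edges.countP (edgeUsesDir f i) ≤ 2) ∧
      (∀ u v : Fin 9, treeT.Adj u v ↔ (cube 4).Adj (f u) (f v)) := by
  refine ⟨⟨⟨4, fF, hemb, hdist⟩, layered_contra⟩, fF, hemb, hdist, hcount, hiff⟩
end

section
/- Let T be the tree on 9 vertices consisting of the path v0, v1, ..., v7 together with one further vertex v8 adjacent to v2, and let P = {{v0,v4}, {v0,v6}, {v3,v7}, {v5,v8}}. Let χ : E(T) → ℕ be any layered edge-labelling of T. Then there is some pair {x,y} ∈ P such that among the labels of the edges of the path in T from x to y, at least four labels each occur exactly once. -/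
open SimpleGraph

instance : DecidableRel treeT.Adj := fun a b =>
  decidable_of_iff' ((s(a, b) = s((0 : Fin 9), (1 : Fin 9)) ∨ s(a, b) = s(1, 2) ∨
      s(a, b) = s(2, 3) ∨ s(a, b) = s(3, 4) ∨ s(a, b) = s(4, 5) ∨ s(a, b) = s(5, 6) ∨
      s(a, b) = s(6, 7) ∨ s(a, b) = s(2, 8)) ∧ a ≠ b)
    (by simp [treeT, Set.mem_insert_iff])

lemma treeT_edge_mem {e : Sym2 (Fin 9)} : e ∈ treeT.edgeSet ↔
    (e = s((0 : Fin 9), (1 : Fin 9)) ∨ e = s(1, 2) ∨ e = s(2, 3) ∨ e = s(3, 4) ∨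
      e = s(4, 5) ∨ e = s(5, 6) ∨ e = s(6, 7) ∨ e = s(2, 8)) := by
  rw [treeT, edgeSet_fromEdgeSet]
  simp only [Set.mem_diff, Set.mem_insert_iff, Set.mem_singleton_iff, Set.mem_setOf_eq]
  constructor
  · rintro ⟨h, -⟩; exact h
  · intro h
    refine ⟨h, ?_⟩
    rcases h with rfl | rfl | rfl | rfl | rfl | rfl | rfl | rfl <;> decide

lemma walk_parity (f : Fin 9 → Bool) (e : Sym2 (Fin 9))
    (hf : ∀ a b : Fin 9, treeT.Adj a b → ((f a = f b) ↔ s(a, b) ≠ e)) :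
    ∀ {x y : Fin 9} (w : treeT.Walk x y), (f x = f y ↔ Even (w.edges.count e)) := by
  intro x y w
  induction w with
  | nil => simp
  | @cons u v z h p ih =>
    rw [SimpleGraph.Walk.edges_cons, List.count_cons]
    by_cases hc : s(u, v) = e
    · have h2 : ¬ (f u = f v) := fun hh => (hf u v h).1 hh hc
      rw [if_pos (by simpa using hc), Nat.even_add_one, ← ih]
      cases hu : f u <;> cases hv : f v <;> cases hz : f z <;> simp_all
    · have h2 : f u = f v := (hf u v h).2 hc
      rw [if_neg (by simpa using hc), Nat.add_zero, h2]
      exact ih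

lemma walk_count (f : Fin 9 → Bool) (e : Sym2 (Fin 9))
    (hf : ∀ a b : Fin 9, treeT.Adj a b → ((f a = f b) ↔ s(a, b) ≠ e))
    {x y : Fin 9} (w : treeT.Walk x y) (hw : w.IsPath) :
    w.edges.count e = if f x = f y then 0 else 1 := by
  have hpar := walk_parity f e hf w
  have hle : w.edges.count e ≤ 1 := List.nodup_iff_count_le_one.1 hw.isTrail.edges_nodup e
  split_ifs with h
  · rcases hpar.1 h with ⟨k, hk⟩; omega
  · have hodd : ¬ Even (w.edges.count e) := fun he => h (hpar.2 he)
    rw [Nat.not_even_iff_odd] at hodd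
    rcases hodd with ⟨k, hk⟩; omega

def g1 : Fin 9 → Bool := fun v => decide (v.val = 0)
def g2 : Fin 9 → Bool := fun v => decide (v.val ≤ 1)
def g3 : Fin 9 → Bool := fun v => decide (v.val ≤ 2 ∨ v.val = 8)
def g4 : Fin 9 → Bool := fun v => decide (v.val ≤ 3 ∨ v.val = 8)
def g5 : Fin 9 → Bool := fun v => decide (v.val ≤ 4 ∨ v.val = 8)
def g6 : Fin 9 → Bool := fun v => decide (v.val ≤ 5 ∨ v.val = 8)
def g7 : Fin 9 → Bool := fun v => decide (v.val ≤ 6 ∨ v.val = 8)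
def g8 : Fin 9 → Bool := fun v => decide (v.val = 8)

lemma edges_perm {x y : Fin 9} (w : treeT.Walk x y) (hw : w.IsPath) (L : List (Sym2 (Fin 9)))
    (hL : ∀ e ∈ L, e ∈ treeT.edgeSet)
    (h1 : L.count s((0 : Fin 9), 1) = if g1 x = g1 y then 0 else 1)
    (h2 : L.count s((1 : Fin 9), 2) = if g2 x = g2 y then 0 else 1)
    (h3 : L.count s((2 : Fin 9), 3) = if g3 x = g3 y then 0 else 1)
    (h4 : L.count s((3 : Fin 9), 4) = if g4 x = g4 y then 0 else 1)
    (h5 : L.count s((4 : Fin 9), 5) = if g5 x = g5 y then 0 else 1)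
    (h6 : L.count s((5 : Fin 9), 6) = if g6 x = g6 y then 0 else 1)
    (h7 : L.count s((6 : Fin 9), 7) = if g7 x = g7 y then 0 else 1)
    (h8 : L.count s((2 : Fin 9), 8) = if g8 x = g8 y then 0 else 1) :
    w.edges.Perm L := by
  rw [List.perm_iff_count]
  intro e
  by_cases he : e ∈ treeT.edgeSet
  · rw [treeT_edge_mem] at he
    rcases he with rfl | rfl | rfl | rfl | rfl | rfl | rfl | rfl
    · exact (walk_count g1 _ (by decide) w hw).trans h1.symm
    · exact (walk_count g2 _ (by decide) w hw).trans h2.symm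
    · exact (walk_count g3 _ (by decide) w hw).trans h3.symm
    · exact (walk_count g4 _ (by decide) w hw).trans h4.symm
    · exact (walk_count g5 _ (by decide) w hw).trans h5.symm
    · exact (walk_count g6 _ (by decide) w hw).trans h6.symm
    · exact (walk_count g7 _ (by decide) w hw).trans h7.symm
    · exact (walk_count g8 _ (by decide) w hw).trans h8.symm
  · rw [List.count_eq_zero_of_not_mem (fun h => he (w.edges_subset_edgeSet h)),
      List.count_eq_zero_of_not_mem (fun h => he (hL e h))]

lemma adj_ne (χ : Sym2 (Fin 9) → ℕ)
    (hcub : ∀ (u v : Fin 9) (w : treeT.Walk u v), w.IsPath → 0 < w.length →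
      ∃ c : ℕ, Odd ((w.edges.map χ).count c))
    {u v z : Fin 9} (h1 : treeT.Adj u v) (h2 : treeT.Adj v z) (huz : u ≠ z) :
    χ s(u, v) ≠ χ s(v, z) := by
  intro heq
  obtain ⟨c, hc⟩ := hcub u z (Walk.cons h1 (Walk.cons h2 Walk.nil))
    (by
      rw [SimpleGraph.Walk.isPath_def]
      simp [h1.ne, h2.ne, huz])
    (by simp)
  have hl : ((Walk.cons h1 (Walk.cons h2 Walk.nil)).edges.map χ) = [χ s(u, v), χ s(v, z)] := rfl
  rw [hl, heq] at hc
  by_cases hcq : c = χ s(v, z)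
  · rw [hcq, List.count_cons_self, List.count_cons_self, List.count_nil] at hc
    rcases hc with ⟨k, hk⟩; omega
  · rw [List.count_cons_of_ne (Ne.symm hcq), List.count_cons_of_ne (Ne.symm hcq), List.count_nil] at hc
    rcases hc with ⟨k, hk⟩; omega

lemma gap1 (χ : Sym2 (Fin 9) → ℕ)
    (hlay : ∀ e₁ ∈ treeT.edgeSet, ∀ e₂ ∈ treeT.edgeSet, χ e₁ = χ e₂ →
      ∀ u v, u ∈ e₁ → v ∈ e₂ →
        ∀ (w : treeT.Walk u v), w.IsPath → (∀ e ∈ w.edges, χ e ≠ χ e₁) → Even w.length)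
    {e₁ e₂ : Sym2 (Fin 9)} {u v : Fin 9}
    (he₁ : e₁ ∈ treeT.edgeSet) (he₂ : e₂ ∈ treeT.edgeSet) (heq : χ e₁ = χ e₂)
    (hu : u ∈ e₁) (hv : v ∈ e₂) (huv : treeT.Adj u v) (hne : χ s(u, v) ≠ χ e₁) : False := by
  have := hlay e₁ he₁ e₂ he₂ heq u v hu hv (Walk.cons huv Walk.nil)
    (by rw [SimpleGraph.Walk.isPath_def]; simp [huv.ne])
    (by intro e he; simp only [SimpleGraph.Walk.edges_cons, SimpleGraph.Walk.edges_nil,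
          List.mem_singleton] at he; rw [he]; exact hne)
  simp at this

lemma gap3 (χ : Sym2 (Fin 9) → ℕ)
    (hlay : ∀ e₁ ∈ treeT.edgeSet, ∀ e₂ ∈ treeT.edgeSet, χ e₁ = χ e₂ →
      ∀ u v, u ∈ e₁ → v ∈ e₂ →
        ∀ (w : treeT.Walk u v), w.IsPath → (∀ e ∈ w.edges, χ e ≠ χ e₁) → Even w.length)
    {e₁ e₂ : Sym2 (Fin 9)} {u m₁ m₂ v : Fin 9}
    (he₁ : e₁ ∈ treeT.edgeSet) (he₂ : e₂ ∈ treeT.edgeSet) (heq : χ e₁ = χ e₂)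
    (hu : u ∈ e₁) (hv : v ∈ e₂)
    (h1 : treeT.Adj u m₁) (h2 : treeT.Adj m₁ m₂) (h3 : treeT.Adj m₂ v)
    (d1 : u ≠ m₂) (d2 : u ≠ v) (d3 : m₁ ≠ v)
    (k1 : χ s(u, m₁) ≠ χ e₁) (k2 : χ s(m₁, m₂) ≠ χ e₁) (k3 : χ s(m₂, v) ≠ χ e₁) : False := by
  have := hlay e₁ he₁ e₂ he₂ heq u v hu hv
    (Walk.cons h1 (Walk.cons h2 (Walk.cons h3 Walk.nil)))
    (by rw [SimpleGraph.Walk.isPath_def]; simp [h1.ne, h2.ne, h3.ne, d1, d2, d3])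
    (by
      intro e he
      simp only [SimpleGraph.Walk.edges_cons, SimpleGraph.Walk.edges_nil, List.mem_cons,
        List.mem_singleton, List.not_mem_nil, or_false] at he
      rcases he with rfl | rfl | rfl
      · exact k1
      · exact k2
      · exact k3)
  simp [Nat.even_add_one, Nat.even_iff] at this

/-- For any layered edge-labelling of `T`, some pair of `P` is joined
by a path on which at least four labels occur exactly once. -/
theorem treeT_layered_labelling_four_unique (χ : Sym2 (Fin 9) → ℕ)
    (hχ : IsLayeredLabelling treeT χ) :
    ∃ x y : Fin 9, s(x, y) ∈ Tpairs ∧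
      ∀ w : treeT.Walk x y, w.IsPath →
        ∃ a b c d : ℕ, a ≠ b ∧ a ≠ c ∧ a ≠ d ∧ b ≠ c ∧ b ≠ d ∧ c ≠ d ∧
          (w.edges.map χ).count a = 1 ∧ (w.edges.map χ).count b = 1 ∧
          (w.edges.map χ).count c = 1 ∧ (w.edges.map χ).count d = 1 := by
  obtain ⟨⟨-, hcub⟩, hlay⟩ := hχ
  -- edge memberships
  have he01 : s((0 : Fin 9), 1) ∈ treeT.edgeSet := treeT.mem_edgeSet.2 (by decide)
  have he12 : s((1 : Fin 9), 2) ∈ treeT.edgeSet := treeT.mem_edgeSet.2 (by decide)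
  have he23 : s((2 : Fin 9), 3) ∈ treeT.edgeSet := treeT.mem_edgeSet.2 (by decide)
  have he34 : s((3 : Fin 9), 4) ∈ treeT.edgeSet := treeT.mem_edgeSet.2 (by decide)
  have he45 : s((4 : Fin 9), 5) ∈ treeT.edgeSet := treeT.mem_edgeSet.2 (by decide)
  have he56 : s((5 : Fin 9), 6) ∈ treeT.edgeSet := treeT.mem_edgeSet.2 (by decide)
  have he67 : s((6 : Fin 9), 7) ∈ treeT.edgeSet := treeT.mem_edgeSet.2 (by decide)
  have he28 : s((2 : Fin 9), 8) ∈ treeT.edgeSet := treeT.mem_edgeSet.2 (by decide)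
  -- adjacent edges get distinct labels
  have n12 : χ s((0 : Fin 9), 1) ≠ χ s((1 : Fin 9), 2) :=
    adj_ne χ hcub (by decide) (by decide) (by decide)
  have n23 : χ s((1 : Fin 9), 2) ≠ χ s((2 : Fin 9), 3) :=
    adj_ne χ hcub (by decide) (by decide) (by decide)
  have n34 : χ s((2 : Fin 9), 3) ≠ χ s((3 : Fin 9), 4) :=
    adj_ne χ hcub (by decide) (by decide) (by decide)
  have n45 : χ s((3 : Fin 9), 4) ≠ χ s((4 : Fin 9), 5) :=
    adj_ne χ hcub (by decide) (by decide) (by decide)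
  have n56 : χ s((4 : Fin 9), 5) ≠ χ s((5 : Fin 9), 6) :=
    adj_ne χ hcub (by decide) (by decide) (by decide)
  have n67 : χ s((5 : Fin 9), 6) ≠ χ s((6 : Fin 9), 7) :=
    adj_ne χ hcub (by decide) (by decide) (by decide)
  have n28 : χ s((1 : Fin 9), 2) ≠ χ s((2 : Fin 9), 8) :=
    adj_ne χ hcub (by decide) (by decide) (by decide)
  have sw32 : s((3 : Fin 9), 2) = s((2 : Fin 9), 3) := Sym2.eq_swap
  have n38 : χ s((2 : Fin 9), 3) ≠ χ s((2 : Fin 9), 8) := by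
    have := adj_ne χ hcub (u := 3) (v := 2) (z := 8) (by decide) (by decide) (by decide)
    rwa [sw32] at this
  -- edges at gap one get distinct labels (layeredness)
  have n13 : χ s((0 : Fin 9), 1) ≠ χ s((2 : Fin 9), 3) := fun h =>
    gap1 χ hlay he01 he23 h (Sym2.mem_mk_right 0 1) (Sym2.mem_mk_left 2 3)
      (by decide) (Ne.symm n12)
  have n24 : χ s((1 : Fin 9), 2) ≠ χ s((3 : Fin 9), 4) := fun h =>
    gap1 χ hlay he12 he34 h (Sym2.mem_mk_right 1 2) (Sym2.mem_mk_left 3 4)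
      (by decide) (Ne.symm n23)
  have n35 : χ s((2 : Fin 9), 3) ≠ χ s((4 : Fin 9), 5) := fun h =>
    gap1 χ hlay he23 he45 h (Sym2.mem_mk_right 2 3) (Sym2.mem_mk_left 4 5)
      (by decide) (Ne.symm n34)
  have n46 : χ s((3 : Fin 9), 4) ≠ χ s((5 : Fin 9), 6) := fun h =>
    gap1 χ hlay he34 he56 h (Sym2.mem_mk_right 3 4) (Sym2.mem_mk_left 5 6)
      (by decide) (Ne.symm n45)
  have n57 : χ s((4 : Fin 9), 5) ≠ χ s((6 : Fin 9), 7) := fun h =>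
    gap1 χ hlay he45 he67 h (Sym2.mem_mk_right 4 5) (Sym2.mem_mk_left 6 7)
      (by decide) (Ne.symm n56)
  have n48 : χ s((3 : Fin 9), 4) ≠ χ s((2 : Fin 9), 8) := fun h =>
    gap1 χ hlay he34 he28 h (Sym2.mem_mk_left 3 4) (Sym2.mem_mk_left 2 8)
      (by decide) (by rw [sw32]; exact n34)
  have n26 : χ s((1 : Fin 9), 2) ≠ χ s((5 : Fin 9), 6) := fun h =>
    gap3 χ hlay he12 he56 h (Sym2.mem_mk_right 1 2) (Sym2.mem_mk_left 5 6)
      (by decide) (by decide) (by decide) (by decide) (by decide) (by decide)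
      (Ne.symm n23) (Ne.symm n24) (fun hh => n56 (hh.trans h))
  by_cases h14 : χ s((0 : Fin 9), 1) = χ s((3 : Fin 9), 4)
  rotate_left
  · -- pair (0, 4)
    refine ⟨0, 4, by simp [Tpairs], ?_⟩
    intro w hw
    have hp := edges_perm w hw [s((0 : Fin 9), 1), s(1, 2), s(2, 3), s(3, 4)]
      (by
        intro e he
        simp only [List.mem_cons, List.not_mem_nil, or_false] at he
        rcases he with rfl | rfl | rfl | rfl
        exacts [he01, he12, he23, he34])
      (by decide) (by decide) (by decide) (by decide) (by decide) (by decide)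
      (by decide) (by decide)
    have hcnt : ∀ c, (w.edges.map χ).count c
        = ([s((0 : Fin 9), 1), s(1, 2), s(2, 3), s(3, 4)].map χ).count c :=
      fun c => (hp.map χ).count_eq c
    refine ⟨χ s((0 : Fin 9), 1), χ s((1 : Fin 9), 2), χ s((2 : Fin 9), 3), χ s((3 : Fin 9), 4),
      n12, n13, h14, n23, n24, n34, ?_, ?_, ?_, ?_⟩ <;> rw [hcnt] <;>
      simp [List.count_cons, Ne.symm n12, Ne.symm n13, Ne.symm n23, Ne.symm n24, Ne.symm n34,
        n12, n13, n23, n24, n34, h14, Ne.symm h14]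
  by_cases h47 : χ s((3 : Fin 9), 4) = χ s((6 : Fin 9), 7)
  rotate_left
  · -- pair (3, 7)
    refine ⟨3, 7, by simp [Tpairs], ?_⟩
    intro w hw
    have hp := edges_perm w hw [s((3 : Fin 9), 4), s(4, 5), s(5, 6), s(6, 7)]
      (by
        intro e he
        simp only [List.mem_cons, List.not_mem_nil, or_false] at he
        rcases he with rfl | rfl | rfl | rfl
        exacts [he34, he45, he56, he67])
      (by decide) (by decide) (by decide) (by decide) (by decide) (by decide)
      (by decide) (by decide)
    have hcnt : ∀ c, (w.edges.map χ).count c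
        = ([s((3 : Fin 9), 4), s(4, 5), s(5, 6), s(6, 7)].map χ).count c :=
      fun c => (hp.map χ).count_eq c
    refine ⟨χ s((3 : Fin 9), 4), χ s((4 : Fin 9), 5), χ s((5 : Fin 9), 6), χ s((6 : Fin 9), 7),
      n45, n46, h47, n56, n57, n67, ?_, ?_, ?_, ?_⟩ <;> rw [hcnt] <;>
      simp [List.count_cons, Ne.symm n45, Ne.symm n46, Ne.symm n56, Ne.symm n57, Ne.symm n67,
        n45, n46, n56, n57, n67, h47, Ne.symm h47]
  by_cases h58 : χ s((4 : Fin 9), 5) = χ s((2 : Fin 9), 8)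
  rotate_left
  · -- pair (5, 8)
    refine ⟨5, 8, by simp [Tpairs], ?_⟩
    intro w hw
    have hp := edges_perm w hw [s((4 : Fin 9), 5), s(3, 4), s(2, 3), s(2, 8)]
      (by
        intro e he
        simp only [List.mem_cons, List.not_mem_nil, or_false] at he
        rcases he with rfl | rfl | rfl | rfl
        exacts [he45, he34, he23, he28])
      (by decide) (by decide) (by decide) (by decide) (by decide) (by decide)
      (by decide) (by decide)
    have hcnt : ∀ c, (w.edges.map χ).count c
        = ([s((4 : Fin 9), 5), s(3, 4), s(2, 3), s(2, 8)].map χ).count c :=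
      fun c => (hp.map χ).count_eq c
    refine ⟨χ s((4 : Fin 9), 5), χ s((3 : Fin 9), 4), χ s((2 : Fin 9), 3), χ s((2 : Fin 9), 8),
      Ne.symm n45, Ne.symm n35, h58, Ne.symm n34, n48, n38, ?_, ?_, ?_, ?_⟩ <;> rw [hcnt] <;>
      simp [List.count_cons, Ne.symm n34, Ne.symm n35, Ne.symm n45, Ne.symm n48, Ne.symm n38,
        n34, n35, n45, n48, n38, h58, Ne.symm h58]
  -- main case : χ e01 = χ e34 = χ e67, χ e45 = χ e28
  have n36 : χ s((2 : Fin 9), 3) ≠ χ s((5 : Fin 9), 6) := by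
    intro h36
    obtain ⟨c, hc⟩ := hcub 8 7
      (Walk.cons (by decide : treeT.Adj 8 2) (Walk.cons (by decide : treeT.Adj 2 3)
        (Walk.cons (by decide : treeT.Adj 3 4) (Walk.cons (by decide : treeT.Adj 4 5)
          (Walk.cons (by decide : treeT.Adj 5 6) (Walk.cons (by decide : treeT.Adj 6 7)
            Walk.nil))))))
      (by rw [SimpleGraph.Walk.isPath_def]; decide) (by decide)
    have hl : ((Walk.cons (by decide : treeT.Adj 8 2) (Walk.cons (by decide : treeT.Adj 2 3)
        (Walk.cons (by decide : treeT.Adj 3 4) (Walk.cons (by decide : treeT.Adj 4 5)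
          (Walk.cons (by decide : treeT.Adj 5 6) (Walk.cons (by decide : treeT.Adj 6 7)
            Walk.nil)))))).edges.map χ)
        = [χ s((8 : Fin 9), 2), χ s((2 : Fin 9), 3), χ s((3 : Fin 9), 4), χ s((4 : Fin 9), 5),
            χ s((5 : Fin 9), 6), χ s((6 : Fin 9), 7)] := rfl
    rw [hl, show s((8 : Fin 9), 2) = s((2 : Fin 9), 8) from Sym2.eq_swap,
      ← h58, ← h36, ← h47, ← h14] at hc
    rw [show ([χ s((4 : Fin 9), 5), χ s((2 : Fin 9), 3), χ s((0 : Fin 9), 1), χ s((4 : Fin 9), 5),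
        χ s((2 : Fin 9), 3), χ s((0 : Fin 9), 1)] : List ℕ)
        = [χ s((4 : Fin 9), 5), χ s((2 : Fin 9), 3), χ s((0 : Fin 9), 1)]
          ++ [χ s((4 : Fin 9), 5), χ s((2 : Fin 9), 3), χ s((0 : Fin 9), 1)] from rfl,
      List.count_append] at hc
    rcases hc with ⟨k, hk⟩; omega
  have n25 : χ s((1 : Fin 9), 2) ≠ χ s((4 : Fin 9), 5) := fun hh => n28 (hh.symm ▸ h58)
  have n15 : χ s((0 : Fin 9), 1) ≠ χ s((4 : Fin 9), 5) := by rw [h14]; exact n45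
  have n16 : χ s((0 : Fin 9), 1) ≠ χ s((5 : Fin 9), 6) := by rw [h14, h47]; exact Ne.symm n67
  -- pair (0, 6)
  refine ⟨0, 6, by simp [Tpairs], ?_⟩
  intro w hw
  have hp := edges_perm w hw [s((0 : Fin 9), 1), s(1, 2), s(2, 3), s(3, 4), s(4, 5), s(5, 6)]
    (by
      intro e he
      simp only [List.mem_cons, List.not_mem_nil, or_false] at he
      rcases he with rfl | rfl | rfl | rfl | rfl | rfl
      exacts [he01, he12, he23, he34, he45, he56])
    (by decide) (by decide) (by decide) (by decide) (by decide) (by decide)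
    (by decide) (by decide)
  have hcnt : ∀ c, (w.edges.map χ).count c
      = ([s((0 : Fin 9), 1), s(1, 2), s(2, 3), s(3, 4), s(4, 5), s(5, 6)].map χ).count c :=
    fun c => (hp.map χ).count_eq c
  refine ⟨χ s((1 : Fin 9), 2), χ s((2 : Fin 9), 3), χ s((4 : Fin 9), 5), χ s((5 : Fin 9), 6),
    n23, n25, n26, n35, n36, n56, ?_, ?_, ?_, ?_⟩ <;> rw [hcnt] <;>
    simp [List.count_cons, Ne.symm n12, Ne.symm n23, Ne.symm n24, Ne.symm n25, Ne.symm n26,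
      Ne.symm n13, Ne.symm n34, Ne.symm n35, Ne.symm n36, Ne.symm n15, Ne.symm n16,
      Ne.symm n45, Ne.symm n46, Ne.symm n56,
      n12, n23, n24, n25, n26, n13, n34, n35, n36, n15, n16, n45, n46, n56]
end

section
/- Let k ≥ 2 be even, let T be a finite tree and let P be a set of unordered pairs of vertices of T such that there exist n and an embedding f of T into Q_n with d(f(x), f(y)) = k−2 for every pair {x,y} ∈ P. Let G be the graph obtained from T by adding, for each pair {x,y} ∈ P, k+1 new paths of length k from x to y whose internal vertices are new and pairwise distinct (so the added paths are vertex-disjoint except at the endpoints x and y). Then G is cubical, i.e., G is isomorphic to a subgraph of Q_m for some m. -/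
open SimpleGraph

/-- The graph obtained from `T` by adding, for each pair `p ∈ P`, `k+1` new paths of
length `k` between the two vertices of `p`, internally vertex-disjoint. The internal
vertices of the `j`-th path for the pair `p` are `(p, j, 0), …, (p, j, k-2)`, attached to
the two endpoints of `p` at the two ends. -/
def spindleGraph {V : Type*} (T : SimpleGraph V) (P : Set (Sym2 V)) (k : ℕ) :
    SimpleGraph (V ⊕ (P × Fin (k + 1) × Fin (k - 1))) where
  Adj a b :=
    match a, b with
    | Sum.inl u, Sum.inl v => T.Adj u v
    | Sum.inl u, Sum.inr (p, _, i) =>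
        ((i : ℕ) = 0 ∧ u = (Quot.out (p : Sym2 V)).1) ∨
        ((i : ℕ) = k - 2 ∧ u = (Quot.out (p : Sym2 V)).2)
    | Sum.inr (p, _, i), Sum.inl u =>
        ((i : ℕ) = 0 ∧ u = (Quot.out (p : Sym2 V)).1) ∨
        ((i : ℕ) = k - 2 ∧ u = (Quot.out (p : Sym2 V)).2)
    | Sum.inr (p, j, i), Sum.inr (q, j', i') =>
        p = q ∧ j = j' ∧ ((i : ℕ) + 1 = (i' : ℕ) ∨ (i' : ℕ) + 1 = (i : ℕ))
  symm := by
    constructor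
    rintro (u | ⟨p, j, i⟩) (v | ⟨q, j', i'⟩) h
    · exact T.symm.symm _ _ h
    · exact h
    · exact h
    · obtain ⟨h1, h2, h3⟩ := h
      exact ⟨h1.symm, h2.symm, h3.symm⟩
  loopless := by
    constructor
    rintro (u | ⟨p, j, i⟩) h
    · exact T.loopless.irrefl u h
    · obtain ⟨-, -, h3⟩ := h
      omega

lemma hammingDist_eq_one_of {ι : Type*} [Fintype ι] {x y : ι → Bool} (i0 : ι)
    (h1 : x i0 ≠ y i0) (h2 : ∀ i, i ≠ i0 → x i = y i) : hammingDist x y = 1 := by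
  classical
  have : (Finset.univ.filter fun i => x i ≠ y i) = {i0} := by
    ext i
    simp only [Finset.mem_filter, Finset.mem_univ, true_and, Finset.mem_singleton]
    constructor
    · intro h; by_contra hne; exact h (h2 i hne)
    · rintro rfl; exact h1
  simpa [hammingDist] using congrArg Finset.card this

lemma hammingDist_comp_equiv {ι κ : Type*} [Fintype ι] [Fintype κ] (e : κ ≃ ι)
    (x y : ι → Bool) : hammingDist (x ∘ e) (y ∘ e) = hammingDist x y := by
  classical
  refine Finset.card_bij (fun i _ => e i) ?_ ?_ ?_
  · intro a ha; simpa using (by simpa using ha : x (e a) ≠ y (e a))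
  · intro a _ b _ hab; exact e.injective hab
  · intro b hb; exact ⟨e.symm b, by simpa using (by simpa using hb : x b ≠ y b), by simp⟩


/-- If `T` is a tree admitting an embedding into a hypercube in which
every pair of `P` is at distance `k-2`, then the graph obtained by adding `k+1` spindle
paths of length `k` between each pair of `P` is cubical. -/
theorem spindleGraph_isCubical {V : Type} [Fintype V]
    (k : ℕ) (hk : 2 ≤ k) (hke : Even k) (T : SimpleGraph V) (hT : T.IsTree)
    (P : Set (Sym2 V))
    (h : ∃ (n : ℕ) (f : V → (Fin n → Bool)), IsEmbedding T (cube n) f ∧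
      ∀ x y : V, s(x, y) ∈ P → hammingDist (f x) (f y) = k - 2) :
    IsCubical (spindleGraph T P k) := by
  classical
  obtain ⟨n, f, ⟨hfinj, hfadj⟩, hP⟩ := h
  haveI : Fintype ↥P := (Set.toFinite P).fintype
  set ι := (Fin n ⊕ (↥P × Fin (k + 1))) with hι
  -- endpoints of each pair
  set a : ↥P → V := fun p => (Quot.out (p : Sym2 V)).1 with ha
  set b : ↥P → V := fun p => (Quot.out (p : Sym2 V)).2 with hb
  have hdist : ∀ p : ↥P, hammingDist (f (a p)) (f (b p)) = k - 2 := by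
    intro p
    apply hP
    have : s(a p, b p) = (p : Sym2 V) := by
      rw [ha, hb]; beta_reduce; exact Quot.out_eq (p : Sym2 V)
    rw [this]; exact p.2
  -- differing coordinates
  set Δ : ↥P → Finset (Fin n) := fun p => Finset.univ.filter fun c => f (a p) c ≠ f (b p) c
    with hΔ
  have hΔcard : ∀ p, (Δ p).card = k - 2 := fun p => by
    simpa [hΔ, hammingDist] using hdist p
  have hΔeq : ∀ p c, c ∉ Δ p → f (a p) c = f (b p) c := by
    intro p c hc
    by_contra hne
    exact hc (by simp [hΔ, hne])
  set σ : (p : ↥P) → Fin (k - 2) → Fin n :=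
    fun p t => ((Δ p).orderIsoOfFin (hΔcard p) t : Fin n) with hσ
  have hσmem : ∀ p t, σ p t ∈ Δ p := fun p t => ((Δ p).orderIsoOfFin (hΔcard p) t).2
  have hσinj : ∀ p, Function.Injective (σ p) := by
    intro p t t' htt
    exact ((Δ p).orderIsoOfFin (hΔcard p)).injective (Subtype.ext htt)
  have hσsurj : ∀ p c, c ∈ Δ p → ∃ t, σ p t = c := by
    intro p c hc
    obtain ⟨t, ht⟩ := ((Δ p).orderIsoOfFin (hΔcard p)).surjective ⟨c, hc⟩
    exact ⟨t, congrArg Subtype.val ht⟩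
  -- internal-vertex coordinate functions
  set w : ↥P → ℕ → Fin n → Bool :=
    fun p i c => if ∃ t : Fin (k - 2), (t : ℕ) < i ∧ σ p t = c then f (b p) c else f (a p) c
    with hw
  have hw_zero : ∀ p, w p 0 = f (a p) := by
    intro p; funext c; simp [hw]
  have hw_last : ∀ p, w p (k - 2) = f (b p) := by
    intro p; funext c
    by_cases hc : c ∈ Δ p
    · obtain ⟨t, ht⟩ := hσsurj p c hc
      simp only [hw]
      rw [if_pos ⟨t, t.isLt, ht⟩]
    · simp only [hw]
      rw [if_neg, hΔeq p c hc]
      rintro ⟨t, -, ht⟩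
      exact hc (ht ▸ hσmem p t)
  have hw_sigma : ∀ p (i : ℕ) (t : Fin (k - 2)),
      w p i (σ p t) = if (t : ℕ) < i then f (b p) (σ p t) else f (a p) (σ p t) := by
    intro p i t
    simp only [hw]
    by_cases hti : (t : ℕ) < i
    · rw [if_pos ⟨t, hti, rfl⟩, if_pos hti]
    · rw [if_neg, if_neg hti]
      rintro ⟨t', ht', hteq⟩
      exact hti (hσinj p hteq ▸ ht')
  have hw_notmem : ∀ p (i : ℕ) c, c ∉ Δ p → w p i c = f (a p) c := by
    intro p i c hc
    simp only [hw]
    rw [if_neg]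
    rintro ⟨t, -, ht⟩
    exact hc (ht ▸ hσmem p t)
  -- the embedding into the big cube indexed by ι
  set g : (V ⊕ (↥P × Fin (k + 1) × Fin (k - 1))) → (ι → Bool) := fun v =>
    match v with
    | Sum.inl u => Sum.elim (f u) (fun _ => false)
    | Sum.inr (p, j, i) => Sum.elim (w p i) (fun q => decide (q = (p, j)))
    with hg
  have hginj : Function.Injective g := by
    rintro (u | ⟨p, j, i⟩) (v | ⟨q, j', i'⟩) huv
    · have : f u = f v := funext fun c => congrFun huv (Sum.inl c)
      exact congrArg Sum.inl (hfinj this)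
    · have := congrFun huv (Sum.inr (q, j'))
      simp [hg] at this
    · have := congrFun huv (Sum.inr (p, j))
      simp [hg] at this
    · have hpq : (p, j) = (q, j') := by
        have := congrFun huv (Sum.inr (p, j))
        simpa [hg] using this
      injection hpq with hpeq hjeq
      subst hpeq; subst hjeq
      have hwe : ∀ c, w p (i : ℕ) c = w p (i' : ℕ) c := by
        intro c
        simpa [hg] using congrFun huv (Sum.inl c)
      have key : ∀ i₁ i₂ : Fin (k - 1), (i₁ : ℕ) < (i₂ : ℕ) →
          (∀ c, w p (i₁ : ℕ) c = w p (i₂ : ℕ) c) → False := by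
        intro i₁ i₂ hlt hwe12
        have h2 : (i₁ : ℕ) < k - 2 := by have := i₂.isLt; omega
        have e1 := hw_sigma p i₁ ⟨i₁, h2⟩
        have e2 := hw_sigma p i₂ ⟨i₁, h2⟩
        rw [if_neg (by simp)] at e1
        rw [if_pos (by simpa using hlt)] at e2
        have hdne : f (a p) (σ p ⟨i₁, h2⟩) ≠ f (b p) (σ p ⟨i₁, h2⟩) := by
          have := hσmem p ⟨i₁, h2⟩
          simpa [hΔ] using this
        exact hdne (by rw [← e1, hwe12 _, e2])
      have hii : i = i' := by
        rcases Nat.lt_trichotomy (i : ℕ) (i' : ℕ) with hlt | heq | hgt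
        · exact absurd (key i i' hlt hwe) (by simp)
        · exact Fin.ext heq
        · exact absurd (key i' i hgt (fun c => (hwe c).symm)) (by simp)
      rw [hii]
  have hgadj : ∀ u v, (spindleGraph T P k).Adj u v → hammingDist (g u) (g v) = 1 := by
    rintro (u | ⟨p, j, i⟩) (v | ⟨q, j', i'⟩) huv
    · -- tree edge
      have h1 : hammingDist (f u) (f v) = 1 := hfadj u v huv
      obtain ⟨i0, hi0⟩ := Finset.card_eq_one.mp (by simpa [hammingDist] using h1)
      refine hammingDist_eq_one_of (Sum.inl i0) ?_ ?_
      · have : i0 ∈ ({i0} : Finset (Fin n)) := Finset.mem_singleton_self i0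
        rw [← hi0] at this
        simpa [hg] using (Finset.mem_filter.mp this).2
      · rintro (c | q) hne
        · have hc : c ∉ Finset.filter (fun i => ¬ f u i = f v i) Finset.univ := by
            rw [hi0]
            simpa using fun hcc => hne (by rw [hcc])
          have : f u c = f v c := by
            by_contra hcc
            exact hc (Finset.mem_filter.mpr ⟨Finset.mem_univ c, hcc⟩)
          simpa [hg] using this
        · simp [hg]
    · -- tree vertex to internal vertex
      have hwu : f u = w q (i' : ℕ) := by
        rcases huv with ⟨hi0, rfl⟩ | ⟨hil, rfl⟩
        · rw [hi0, hw_zero]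
        · rw [hil, hw_last]
      refine hammingDist_eq_one_of (Sum.inr (q, j')) ?_ ?_
      · simp [hg]
      · rintro (c | r) hne
        · simp only [hg, Sum.elim_inl]
          rw [hwu]
        · simp only [hg, Sum.elim_inr]
          have : r ≠ (q, j') := fun hrr => hne (by rw [hrr])
          simp [this]
    · -- internal vertex to tree vertex
      have hwu : f v = w p (i : ℕ) := by
        rcases huv with ⟨hi0, rfl⟩ | ⟨hil, rfl⟩
        · rw [hi0, hw_zero]
        · rw [hil, hw_last]
      refine hammingDist_eq_one_of (Sum.inr (p, j)) ?_ ?_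
      · simp [hg]
      · rintro (c | r) hne
        · simp only [hg, Sum.elim_inl]
          rw [hwu]
        · simp only [hg, Sum.elim_inr]
          have : r ≠ (p, j) := fun hrr => hne (by rw [hrr])
          simp [this]
    · -- two internal vertices
      obtain ⟨rfl, rfl, hii⟩ := huv
      have key : ∀ i₁ i₂ : Fin (k - 1), (i₁ : ℕ) + 1 = (i₂ : ℕ) →
          hammingDist (g (Sum.inr (p, j, i₁))) (g (Sum.inr (p, j, i₂))) = 1 := by
        intro i₁ i₂ h12
        have h2 : (i₁ : ℕ) < k - 2 := by have := i₂.isLt; omega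
        refine hammingDist_eq_one_of (Sum.inl (σ p ⟨i₁, h2⟩)) ?_ ?_
        · simp only [hg, Sum.elim_inl]
          rw [hw_sigma, hw_sigma, if_neg (by simp), if_pos (by simp; omega)]
          have := hσmem p ⟨i₁, h2⟩
          simp only [hΔ, Finset.mem_filter] at this
          exact this.2
        · rintro (c | r) hne
          · simp only [hg, Sum.elim_inl]
            by_cases hc : c ∈ Δ p
            · obtain ⟨t, rfl⟩ := hσsurj p c hc
              have htne : t ≠ ⟨i₁, h2⟩ := fun hcon => hne (by rw [hcon])
              rw [hw_sigma, hw_sigma]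
              have : ((t : ℕ) < (i₁ : ℕ)) ↔ ((t : ℕ) < (i₂ : ℕ)) := by
                have : (t : ℕ) ≠ (i₁ : ℕ) := fun hcon => htne (Fin.ext hcon)
                omega
              rcases (iff_iff_and_or_not_and_not.mp this) with ⟨ht1, ht2⟩ | ⟨ht1, ht2⟩
              · rw [if_pos ht1, if_pos ht2]
              · rw [if_neg ht1, if_neg ht2]
            · rw [hw_notmem p _ c hc, hw_notmem p _ c hc]
          · simp [hg]
      rcases hii with h12 | h21
      · exact key i i' h12
      · rw [hammingDist_comm]
        exact key i' i h21
  -- transfer to a hypercube on `Fin m`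
  refine ⟨Fintype.card ι, fun v => g v ∘ (Fintype.equivFin ι).symm, ?_, ?_⟩
  · intro u v huv
    apply hginj
    funext c
    have := congrFun huv (Fintype.equivFin ι c)
    simpa using this
  · intro u v huv
    show hammingDist _ _ = 1
    rw [hammingDist_comp_equiv]
    exact hgadj u v huv
end

section
/- Let k ≥ 2 be even, let T be a finite tree and let P be a set of unordered pairs of vertices of T such that (T, P) is (k−2)-distance-separating. Let G be the graph obtained from T by adding, for each pair {x,y} ∈ P, k+1 new paths of length k from x to y whose internal vertices are new and pairwise distinct (so the added paths are vertex-disjoint except at the endpoints x and y). Then G is not layered: for all n and all j, G is not isomorphic to a subgraph of the j-th layer of Q_n. -/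
open SimpleGraph

/-- If `T` is a tree such that `(T, P)` is `(k-2)`-distance-separating,
then the graph obtained by adding `k+1` spindle paths of length `k` between each pair of
`P` is not layered. -/
theorem spindleGraph_not_isLayered {V : Type} [Fintype V]
    (k : ℕ) (hk : 2 ≤ k) (hke : Even k) (T : SimpleGraph V) (hT : T.IsTree)
    (P : Set (Sym2 V)) (h : DistSeparating T P (k - 2)) :
    ¬ IsLayered (spindleGraph T P k) := by
  rintro ⟨n, j, g, hginj, hgadj⟩
  -- the restriction of g to T is an embedding of T into the layer
  have hT' : IsEmbedding T (layer n j) (fun v => g (Sum.inl v)) := by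
    refine ⟨fun u v huv => ?_, fun u v huv => hgadj _ _ huv⟩
    have := hginj huv
    simpa using this
  obtain ⟨x, y, hxy, hd⟩ := h.2 n j _ hT'
  -- every edge of the spindle graph maps to a Hamming-distance-1 pair
  have hcube : ∀ u v, (spindleGraph T P k).Adj u v →
      hammingDist (g u).1 (g v).1 = 1 := fun u v huv => hgadj u v huv
  set p : ↥P := ⟨s(x, y), hxy⟩ with hp
  set a := (Quot.out (p : Sym2 V)).1 with ha
  set b := (Quot.out (p : Sym2 V)).2 with hb
  set A := (g (Sum.inl a)).1 with hA
  set B := (g (Sum.inl b)).1 with hB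
  have hab : s(a, b) = s(x, y) := Quot.out_eq (p : Sym2 V)
  -- Hamming distance between the images of a and b is k
  have hdk : hammingDist A B = k := by
    rcases Sym2.eq_iff.mp hab with ⟨h1, h2⟩ | ⟨h1, h2⟩
    · rw [hA, hB, h1, h2, hd]; omega
    · rw [hA, hB, h1, h2, hammingDist_comm, hd]; omega
  have hk1 : 0 < k - 1 := by omega
  -- images of the internal path vertices
  set W : Fin (k + 1) → Fin (k - 1) → (Fin n → Bool) :=
    fun j' t => (g (Sum.inr (p, j', t))).1 with hW
  -- chain bound: distance from t-th internal vertex to B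
  have chain : ∀ (j' : Fin (k + 1)) (d t : ℕ), t + d = k - 2 → ∀ htl : t < k - 1,
      hammingDist (W j' ⟨t, htl⟩) B ≤ d + 1 := by
    intro j' d
    induction d with
    | zero =>
      intro t ht htl
      have hadj : (spindleGraph T P k).Adj (Sum.inr (p, j', ⟨t, htl⟩)) (Sum.inl b) := by
        show _ ∨ _
        exact Or.inr ⟨show t = k - 2 by omega, rfl⟩
      exact le_of_eq (hcube _ _ hadj)
    | succ d ih =>
      intro t ht htl
      have htl2 : t + 1 < k - 1 := by omega
      have hadj : (spindleGraph T P k).Adj (Sum.inr (p, j', ⟨t, htl⟩))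
          (Sum.inr (p, j', ⟨t + 1, htl2⟩)) := ⟨rfl, rfl, Or.inl rfl⟩
      have h1 : hammingDist (W j' ⟨t, htl⟩) (W j' ⟨t + 1, htl2⟩) = 1 := hcube _ _ hadj
      have h2 := ih (t + 1) (by omega) htl2
      have h3 := hammingDist_triangle (W j' ⟨t, htl⟩) (W j' ⟨t + 1, htl2⟩) B
      omega
  -- first internal vertex of each path
  set C : Fin (k + 1) → (Fin n → Bool) := fun j' => W j' ⟨0, hk1⟩ with hC
  have hAC : ∀ j', hammingDist A (C j') = 1 := by
    intro j'
    have hadj : (spindleGraph T P k).Adj (Sum.inl a) (Sum.inr (p, j', ⟨0, hk1⟩)) := by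
      show _ ∨ _
      exact Or.inl ⟨rfl, rfl⟩
    exact hcube _ _ hadj
  have hCB : ∀ j', hammingDist (C j') B ≤ k - 1 := by
    intro j'
    have := chain j' (k - 2) 0 (by omega) hk1
    show hammingDist (W j' ⟨0, hk1⟩) B ≤ k - 1
    omega
  -- for each path, the unique differing coordinate; it lies in the difference set of A, B
  have key : ∀ j' : Fin (k + 1), ∃ i : Fin n, A i ≠ C j' i ∧
      (∀ l, l ≠ i → A l = C j' l) ∧ A i ≠ B i := by
    intro j'
    have h1 : (Finset.univ.filter fun i => A i ≠ C j' i).card = 1 := hAC j'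
    obtain ⟨i, hi⟩ := Finset.card_eq_one.mp h1
    refine ⟨i, ?_, ?_, ?_⟩
    · have : i ∈ Finset.univ.filter fun i => A i ≠ C j' i := by rw [hi]; simp
      exact (Finset.mem_filter.mp this).2
    · intro l hl
      by_contra hcon
      have : l ∈ Finset.univ.filter fun i => A i ≠ C j' i := by
        exact Finset.mem_filter.mpr ⟨Finset.mem_univ _, hcon⟩
      rw [hi] at this
      exact hl (Finset.mem_singleton.mp this)
    · -- if A i = B i, the distance from C j' to B would be ≥ k + 1
      intro hcon
      have hsub : insert i (Finset.univ.filter fun l => A l ≠ B l) ⊆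
          Finset.univ.filter fun l => C j' l ≠ B l := by
        intro l hl
        rcases Finset.mem_insert.mp hl with rfl | hl
        · refine Finset.mem_filter.mpr ⟨Finset.mem_univ _, ?_⟩
          have : l ∈ Finset.univ.filter fun i => A i ≠ C j' i := by rw [hi]; simp
          have hne := (Finset.mem_filter.mp this).2
          intro hcb
          exact hne (by rw [hcon, hcb])
        · refine Finset.mem_filter.mpr ⟨Finset.mem_univ _, ?_⟩
          have hne := (Finset.mem_filter.mp hl).2
          have hli : l ≠ i := fun hli => hne (hli ▸ hcon)
          have hAeq : A l = C j' l := by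
            by_contra hcon2
            have hmem : l ∈ Finset.univ.filter fun i => A i ≠ C j' i :=
              Finset.mem_filter.mpr ⟨Finset.mem_univ _, hcon2⟩
            rw [hi] at hmem
            exact hli (Finset.mem_singleton.mp hmem)
          rw [← hAeq]; exact hne
      have hcard : k + 1 ≤ hammingDist (C j') B := by
        have h2 : (insert i (Finset.univ.filter fun l => A l ≠ B l)).card = k + 1 := by
          rw [Finset.card_insert_of_notMem (by simp [hcon]), ← hdk]
          rfl
        calc k + 1 = _ := h2.symm
          _ ≤ (Finset.univ.filter fun l => C j' l ≠ B l).card := Finset.card_le_card hsub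
          _ = hammingDist (C j') B := rfl
      have := hCB j'
      omega
  choose ι hι1 hι2 hι3 using key
  -- ι is injective
  have hιinj : Function.Injective ι := by
    intro j1 j2 hj
    have hCeq : C j1 = C j2 := by
      funext l
      by_cases hl : l = ι j1
      · subst hl
        have e1 := hι1 j1
        have e2 := hι1 j2
        rw [← hj] at e2
        revert e1 e2
        cases A (ι j1) <;> cases C j1 (ι j1) <;> cases C j2 (ι j1) <;> simp
      · have e1 := hι2 j1 l hl
        have e2 := hι2 j2 l (fun hlk => hl (hlk.trans hj.symm))
        rw [← e1, ← e2]
    have : g (Sum.inr (p, j1, ⟨0, hk1⟩)) = g (Sum.inr (p, j2, ⟨0, hk1⟩)) := by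
      apply Subtype.ext
      exact hCeq
    have := hginj this
    simpa using this
  -- pigeonhole: k+1 distinct coordinates in a set of size k
  have hcount : (Finset.univ : Finset (Fin (k + 1))).card ≤
      (Finset.univ.filter fun i => A i ≠ B i).card := by
    apply Finset.card_le_card_of_injOn ι
    · intro j' _
      exact Finset.mem_filter.mpr ⟨Finset.mem_univ _, hι3 j'⟩
    · exact hιinj.injOn
  rw [Finset.card_univ, Fintype.card_fin] at hcount
  have : (Finset.univ.filter fun i => A i ≠ B i).card = k := hdk
  omega
end

section
/- Let G be a finite connected simple graph that is cubical but not layered. Then G has positive Turán edge-density in the hypercube: there exists a constant c > 0 such that for every n, the hypercube Q_n contains a subgraph H with no subgraph isomorphic to G and with at least c times as many edges as Q_n. -/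
open SimpleGraph

lemma onesCount_adj {n : ℕ} {x y : Fin n → Bool} (h : (cube n).Adj x y) :
    onesCount y = onesCount x + 1 ∨ onesCount x = onesCount y + 1 := by
  have h1 : (Finset.univ.filter fun i => x i ≠ y i).card = 1 := h
  obtain ⟨i0, hi0⟩ := Finset.card_eq_one.mp h1
  have hne : x i0 ≠ y i0 := by
    have : i0 ∈ Finset.univ.filter fun i => x i ≠ y i := hi0 ▸ Finset.mem_singleton_self i0
    simpa using this
  have heq : ∀ j, j ≠ i0 → x j = y j := by
    intro j hj
    by_contra hc
    have : j ∈ ({i0} : Finset (Fin n)) := hi0 ▸ (by simp [hc])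
    exact hj (Finset.mem_singleton.mp this)
  have hx : onesCount x = (if x i0 = true then 1 else 0)
      + ∑ j ∈ Finset.univ.erase i0, (if x j = true then 1 else 0) := by
    rw [onesCount, Finset.card_filter, ← Finset.add_sum_erase _ _ (Finset.mem_univ i0)]
  have hy : onesCount y = (if y i0 = true then 1 else 0)
      + ∑ j ∈ Finset.univ.erase i0, (if y j = true then 1 else 0) := by
    rw [onesCount, Finset.card_filter, ← Finset.add_sum_erase _ _ (Finset.mem_univ i0)]
  have hsum : ∑ j ∈ Finset.univ.erase i0, (if x j = true then 1 else 0)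
      = ∑ j ∈ Finset.univ.erase i0, (if y j = true then 1 else 0) :=
    Finset.sum_congr rfl fun j hj => by rw [heq j (Finset.ne_of_mem_erase hj)]
  cases hx0 : x i0 <;> cases hy0 : y i0 <;> simp_all <;> omega

/-- Half of the cube: edges whose lower endpoint level has parity `p`. -/
def halfCube (n p : ℕ) : SimpleGraph (Fin n → Bool) where
  Adj x y := (cube n).Adj x y ∧ min (onesCount x) (onesCount y) % 2 = p
  symm := by
    constructor; intro x y ⟨h1, h2⟩
    exact ⟨(cube n).adj_symm h1, by rwa [min_comm]⟩
  loopless := by constructor; intro x ⟨h, _⟩; exact (cube n).loopless.irrefl x h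

lemma level_walk {V : Type*} {G : SimpleGraph V} {n p : ℕ} {f : V → (Fin n → Bool)}
    (hf : IsEmbedding G (halfCube n p) f) {m : ℕ} (hm : m % 2 = p) {a v : V}
    (w : G.Walk a v) (ha : onesCount (f a) = m ∨ onesCount (f a) = m + 1) :
    onesCount (f v) = m ∨ onesCount (f v) = m + 1 := by
  induction w with
  | nil => exact ha
  | @cons u b c hub w ih =>
    apply ih
    obtain ⟨hcube, hp2⟩ := hf.2 _ _ hub
    have hstep := onesCount_adj hcube
    rcases min_cases (onesCount (f u)) (onesCount (f b)) with ⟨h1, h2⟩ | ⟨h1, h2⟩ <;>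
      rw [h1] at hp2 <;> omega


lemma not_embed_halfCube {V : Type*} {G : SimpleGraph V} (hconn : G.Connected)
    (hlay : ¬ IsLayered G) (n p : ℕ) :
    ¬ ∃ f : V → (Fin n → Bool), IsEmbedding G (halfCube n p) f := by
  rintro ⟨f, hf⟩
  by_cases hedge : ∃ a b, G.Adj a b
  · obtain ⟨a, b, hab⟩ := hedge
    obtain ⟨hcube, hp2⟩ := hf.2 _ _ hab
    set m := min (onesCount (f a)) (onesCount (f b)) with hmdef
    have hstep := onesCount_adj hcube
    have ha : onesCount (f a) = m ∨ onesCount (f a) = m + 1 := by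
      rcases min_cases (onesCount (f a)) (onesCount (f b)) with ⟨h1, h2⟩ | ⟨h1, h2⟩ <;> omega
    have hall : ∀ v, f v ∈ layerSet n m := fun v =>
      level_walk hf hp2 ((hconn.preconnected a v).some) ha
    refine hlay ⟨n, m, fun v => ⟨f v, hall v⟩, ?_, ?_⟩
    · intro u v huv
      exact hf.1 (congrArg Subtype.val huv)
    · intro u v huv
      exact (hf.2 u v huv).1
  · push_neg at hedge
    have hsub : ∀ u v : V, u = v := by
      intro u v
      obtain ⟨w⟩ := hconn.preconnected u v
      cases w with
      | nil => rfl
      | cons h _ => exact absurd h (hedge _ _)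
    refine hlay ⟨0, 0, fun _ => ⟨fun i => i.elim0, Or.inl (by simp [onesCount])⟩, ?_, ?_⟩
    · intro u v _; exact hsub u v
    · intro u v huv
      have := hsub u v
      subst this
      exact absurd huv (G.loopless.irrefl u)


/-- A finite connected graph that is cubical but not layered has
positive Turán edge-density in the hypercube. -/
theorem positive_turan_density_of_not_layered {V : Type} [Fintype V]
    (G : SimpleGraph V) (hconn : G.Connected) (hcub : IsCubical G)
    (hlay : ¬ IsLayered G) :
    ∃ c : ℝ, 0 < c ∧ ∀ n : ℕ, ∃ H : SimpleGraph (Fin n → Bool), H ≤ cube n ∧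
      (¬ ∃ f : V → (Fin n → Bool), IsEmbedding G H f) ∧
      c * ((cube n).edgeSet.ncard : ℝ) ≤ (H.edgeSet.ncard : ℝ) := by
  refine ⟨1/2, by norm_num, fun n => ?_⟩
  have hle : ∀ p, halfCube n p ≤ cube n := fun p u v h => h.1
  have hU : (halfCube n 0).edgeSet ∪ (halfCube n 1).edgeSet = (cube n).edgeSet := by
    ext e
    induction e using Sym2.ind with
    | _ x y =>
      simp only [Set.mem_union, mem_edgeSet]
      constructor
      · rintro (⟨h, _⟩ | ⟨h, _⟩) <;> exact h
      · intro h
        rcases Nat.mod_two_eq_zero_or_one (min (onesCount x) (onesCount y)) with h2 | h2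
        · exact Or.inl ⟨h, h2⟩
        · exact Or.inr ⟨h, h2⟩
  have hD : Disjoint (halfCube n 0).edgeSet (halfCube n 1).edgeSet := by
    rw [Set.disjoint_left]
    intro e he0 he1
    induction e using Sym2.ind with
    | _ x y =>
      rw [mem_edgeSet] at he0 he1
      obtain ⟨_, h0⟩ := he0
      obtain ⟨_, h1⟩ := he1
      omega
  have hc : (cube n).edgeSet.ncard
      = (halfCube n 0).edgeSet.ncard + (halfCube n 1).edgeSet.ncard := by
    rw [← hU, Set.ncard_union_eq hD (Set.toFinite _) (Set.toFinite _)]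
  by_cases hcmp : (halfCube n 1).edgeSet.ncard ≤ (halfCube n 0).edgeSet.ncard
  · refine ⟨halfCube n 0, hle 0, not_embed_halfCube hconn hlay n 0, ?_⟩
    have h2 : ((cube n).edgeSet.ncard : ℝ) ≤ 2 * ((halfCube n 0).edgeSet.ncard : ℝ) := by
      exact_mod_cast (by omega : (cube n).edgeSet.ncard ≤ 2 * (halfCube n 0).edgeSet.ncard)
    linarith
  · refine ⟨halfCube n 1, hle 1, not_embed_halfCube hconn hlay n 1, ?_⟩
    have h2 : ((cube n).edgeSet.ncard : ℝ) ≤ 2 * ((halfCube n 1).edgeSet.ncard : ℝ) := by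
      exact_mod_cast (by omega : (cube n).edgeSet.ncard ≤ 2 * (halfCube n 1).edgeSet.ncard)
    linarith
end
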